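/- arXiv:math/0203275 — 7 statements merged into one kernel-verified Lean document; each statement's English description precedes it below -/
import Mathlib

section
/- Let X be a random variable with median 0, and suppose 1/3 < c < 1/√8. Define β_0 = P{X > 0} and β_k - β_{k+1} = P{X ∈ (cσ(X)k, cσ(X)(k+1)]} for k ≥ 0, where σ(X) > 0 is the standard deviation. If β_{k+1} ≤ β_k/2 for all k ≥ 0, then ∫_0^∞ P{X > λ} · 2λ dλ < σ(X)^2 / 2. -/
open MeasureTheory ProbabilityTheory

theorem stmt_2 {Ω : Type*} [MeasureSpace Ω] [IsProbabilityMeasure (ℙ : Measure Ω)]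
    (X : Ω → ℝ) (hX : MemLp X 2)
    (σX : ℝ) (hσX : σX = Real.sqrt (variance X ℙ)) (hσpos : 0 < σX)
    (hmed1 : (ℙ {ω | X ω ≥ 0}).toReal ≥ 1 / 2)
    (hmed2 : (ℙ {ω | X ω ≤ 0}).toReal ≥ 1 / 2)
    (c : ℝ) (hc1 : 1 / 3 < c) (hc2 : c < 1 / Real.sqrt 8)
    (β : ℕ → ℝ) (hβ0 : β 0 = (ℙ {ω | X ω > 0}).toReal)
    (hβ : ∀ k : ℕ, β k - β (k + 1) =
      (ℙ {ω | X ω ∈ Set.Ioc (c * σX * k) (c * σX * (k + 1))}).toReal)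
    (hhalf : ∀ k : ℕ, β (k + 1) ≤ β k / 2) :
    ∫ l in Set.Ioi (0 : ℝ), (ℙ {ω | X ω > l}).toReal * (2 * l) < σX ^ 2 / 2 := by
  have hcpos : 0 < c := lt_trans (by norm_num) hc1
  set a := c * σX with ha_def
  have ha : 0 < a := mul_pos hcpos hσpos
  have hXnm : NullMeasurable X ℙ := hX.aestronglyMeasurable.aemeasurable.nullMeasurable
  have hnm : ∀ t : ℝ, NullMeasurableSet {ω | X ω > t} ℙ := fun t =>
    hXnm measurableSet_Ioi
  -- β 0 ≤ 1/2
  have hβ0le : β 0 ≤ 1 / 2 := by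
    have hcompl : {ω | X ω > 0} = {ω | X ω ≤ 0}ᶜ := by
      ext ω; simp [not_le]
    have hadd : ℙ {ω | X ω ≤ 0} + ℙ {ω | X ω > 0} = 1 := by
      rw [hcompl]
      simpa using measure_add_measure_compl₀ (μ := ℙ) (s := {ω | X ω ≤ 0}) (hXnm measurableSet_Iic)
    have htr : (ℙ {ω | X ω ≤ 0}).toReal + (ℙ {ω | X ω > 0}).toReal = 1 := by
      rw [← ENNReal.toReal_add (measure_ne_top _ _) (measure_ne_top _ _), hadd]
      simp
    rw [hβ0]; linarith
  -- β k = P(X > a k)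
  have hβk : ∀ k : ℕ, β k = (ℙ {ω | X ω > a * k}).toReal := by
    intro k
    induction k with
    | zero => simpa using hβ0
    | succ k ih =>
      have hk1 : a * k ≤ a * (k + 1 : ℕ) := by
        push_cast; nlinarith [ha.le]
      have hsplit : {ω | X ω > a * k}
          = {ω | X ω > a * ((k : ℝ) + 1)} ∪ {ω | X ω ∈ Set.Ioc (a * k) (a * ((k : ℝ) + 1))} := by
        ext ω
        simp only [Set.mem_setOf_eq, Set.mem_union, Set.mem_Ioc]
        constructor
        · intro h
          rcases le_or_gt (X ω) (a * ((k : ℝ) + 1)) with h' | h'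
          · exact Or.inr ⟨h, h'⟩
          · exact Or.inl h'
        · rintro (h | ⟨h, _⟩)
          · push_cast at hk1 ⊢; linarith
          · exact h
      have hdisj : AEDisjoint ℙ {ω | X ω > a * ((k : ℝ) + 1)}
          {ω | X ω ∈ Set.Ioc (a * k) (a * ((k : ℝ) + 1))} := by
        apply Disjoint.aedisjoint
        rw [Set.disjoint_left]
        intro ω h1 h2
        exact absurd h2.2 (not_le.mpr h1)
      have hmeq : ℙ {ω | X ω > a * k}
          = ℙ {ω | X ω > a * ((k : ℝ) + 1)} + ℙ {ω | X ω ∈ Set.Ioc (a * k) (a * ((k : ℝ) + 1))} := by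
        rw [hsplit]
        exact measure_union₀ (hXnm measurableSet_Ioc) hdisj
      have hβk' := hβ k
      have : β (k + 1) = β k - (ℙ {ω | X ω ∈ Set.Ioc (a * k) (a * ((k : ℝ) + 1))}).toReal := by
        linarith [hβk']
      rw [this, ih, hmeq, ENNReal.toReal_add (measure_ne_top _ _) (measure_ne_top _ _)]
      push_cast
      ring
  have hβnn : ∀ k, 0 ≤ β k := fun k => (hβk k) ▸ ENNReal.toReal_nonneg
  -- β k ≤ (1/2)^(k+1)
  have hβbd : ∀ k : ℕ, β k ≤ (1 / 2 : ℝ) ^ (k + 1) := by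
    intro k
    induction k with
    | zero => simpa using hβ0le
    | succ k ih =>
      calc β (k + 1) ≤ β k / 2 := hhalf k
        _ ≤ (1 / 2 : ℝ) ^ (k + 1) / 2 := by linarith
        _ = (1 / 2 : ℝ) ^ (k + 1 + 1) := by ring
  -- measurability of l ↦ P(X > l)
  have hanti : Antitone (fun l : ℝ => (ℙ {ω | X ω > l}).toReal) := by
    intro l₁ l₂ h
    exact ENNReal.toReal_mono (measure_ne_top _ _)
      (measure_mono fun ω hω => lt_of_le_of_lt h hω)
  have hmeas : Measurable (fun l : ℝ => (ℙ {ω | X ω > l}).toReal) := hanti.measurable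
  have hfm : AEStronglyMeasurable (fun l : ℝ => (ℙ {ω | X ω > l}).toReal * (2 * l))
      (volume.restrict (Set.Ioi (0 : ℝ))) :=
    ((hmeas.mul (measurable_id.const_mul 2)).aestronglyMeasurable).restrict
  have hfnn : 0 ≤ᶠ[ae (volume.restrict (Set.Ioi (0 : ℝ)))]
      fun l : ℝ => (ℙ {ω | X ω > l}).toReal * (2 * l) := by
    rw [Filter.EventuallyLE, ae_restrict_iff' measurableSet_Ioi]
    exact ae_of_all _ fun l hl =>
      mul_nonneg ENNReal.toReal_nonneg (by nlinarith [Set.mem_Ioi.mp hl])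
  have key : ∫ l in Set.Ioi (0 : ℝ), (ℙ {ω | X ω > l}).toReal * (2 * l)
      = (∫⁻ l in Set.Ioi (0 : ℝ),
          ENNReal.ofReal ((ℙ {ω | X ω > l}).toReal * (2 * l))).toReal :=
    integral_eq_lintegral_of_nonneg_ae hfnn hfm
  -- the lintegral bound
  have hsub : Set.Ioi (0 : ℝ) ⊆ ⋃ k : ℕ, Set.Ico (a * k) (a * (k + 1 : ℕ)) := by
    intro l hl
    have hl0 : (0 : ℝ) < l := hl
    refine Set.mem_iUnion.mpr ⟨⌊l / a⌋₊, ?_⟩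
    constructor
    · calc a * ⌊l / a⌋₊ ≤ a * (l / a) := by
            exact mul_le_mul_of_nonneg_left (Nat.floor_le (by positivity)) ha.le
        _ = l := by field_simp
    · have : l / a < ⌊l / a⌋₊ + 1 := Nat.lt_floor_add_one _
      push_cast
      calc l = a * (l / a) := by field_simp
        _ < a * (⌊l / a⌋₊ + 1) := by
            exact mul_lt_mul_of_pos_left this ha
  have hpiece : ∀ k : ℕ, (∫⁻ l in Set.Ico (a * k) (a * (k + 1 : ℕ)),
      ENNReal.ofReal ((ℙ {ω | X ω > l}).toReal * (2 * l)))
      ≤ ENNReal.ofReal (2 * a ^ 2 * (k + 1) * (1 / 2 : ℝ) ^ (k + 1)) := by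
    intro k
    have hconst : ∀ l ∈ Set.Ico (a * (k:ℝ)) (a * ((k:ℕ) + 1 : ℕ) : ℝ),
        ENNReal.ofReal ((ℙ {ω | X ω > l}).toReal * (2 * l))
        ≤ ENNReal.ofReal (2 * a * (k + 1) * (1 / 2 : ℝ) ^ (k + 1)) := by
      intro l hl
      apply ENNReal.ofReal_le_ofReal
      have h1 : (ℙ {ω | X ω > l}).toReal ≤ (1 / 2 : ℝ) ^ (k + 1) := by
        calc (ℙ {ω | X ω > l}).toReal ≤ (ℙ {ω | X ω > a * k}).toReal := hanti hl.1
          _ = β k := (hβk k).symm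
          _ ≤ _ := hβbd k
      have hl2 : l < a * (k + 1) := by
        have := hl.2; push_cast at this; linarith
      have hlnn : 0 ≤ l := le_trans (by positivity) hl.1
      calc (ℙ {ω | X ω > l}).toReal * (2 * l)
          ≤ (1 / 2 : ℝ) ^ (k + 1) * (2 * (a * (k + 1))) := by
            apply mul_le_mul h1 (by linarith) (by linarith) (by positivity)
        _ = 2 * a * (k + 1) * (1 / 2 : ℝ) ^ (k + 1) := by ring
    calc (∫⁻ l in Set.Ico (a * k) (a * (k + 1 : ℕ)),
          ENNReal.ofReal ((ℙ {ω | X ω > l}).toReal * (2 * l)))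
        ≤ ∫⁻ _ in Set.Ico (a * k) (a * (k + 1 : ℕ)),
            ENNReal.ofReal (2 * a * (k + 1) * (1 / 2 : ℝ) ^ (k + 1)) :=
          setLIntegral_mono measurable_const hconst
      _ = ENNReal.ofReal (2 * a * (k + 1) * (1 / 2 : ℝ) ^ (k + 1))
          * volume (Set.Ico (a * (k:ℝ)) (a * ((k + 1 : ℕ) : ℝ))) := setLIntegral_const _ _
      _ = ENNReal.ofReal (2 * a * (k + 1) * (1 / 2 : ℝ) ^ (k + 1)) * ENNReal.ofReal a := by
          rw [Real.volume_Ico]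
          congr 1
          push_cast
          ring_nf
      _ = ENNReal.ofReal (2 * a ^ 2 * (k + 1) * (1 / 2 : ℝ) ^ (k + 1)) := by
          rw [← ENNReal.ofReal_mul (by positivity)]
          congr 1
          ring
  -- summing
  set g : ℕ → ℝ := fun n => (n : ℝ) * (1 / 2 : ℝ) ^ n with hg_def
  have hgsum : Summable g := by
    have h := summable_pow_mul_geometric_of_norm_lt_one (R := ℝ) 1
      (r := (1 / 2 : ℝ)) (by rw [Real.norm_eq_abs, abs_of_pos] <;> norm_num)
    exact h.congr (fun n => by rw [pow_one])
  have hgtsum : ∑' n, g n = 2 := by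
    have h := tsum_coe_mul_geometric_of_norm_lt_one (𝕜 := ℝ)
      (r := (1 / 2 : ℝ)) (by rw [Real.norm_eq_abs, abs_of_pos] <;> norm_num)
    rw [hg_def]
    rw [h]
    norm_num
  have hterm : ∀ k : ℕ, 2 * a ^ 2 * ((k : ℝ) + 1) * (1 / 2 : ℝ) ^ (k + 1)
      = 2 * a ^ 2 * g (k + 1) := by
    intro k; rw [hg_def]; push_cast; ring
  have hgsucc : Summable (fun k : ℕ => g (k + 1)) :=
    hgsum.comp_injective (add_left_injective 1)
  have hsummable : Summable (fun k : ℕ => 2 * a ^ 2 * ((k : ℝ) + 1) * (1 / 2 : ℝ) ^ (k + 1)) := by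
    apply Summable.congr (hgsucc.mul_left (2 * a ^ 2))
    intro k; rw [hterm k]
  have htsum : ∑' k : ℕ, 2 * a ^ 2 * ((k : ℝ) + 1) * (1 / 2 : ℝ) ^ (k + 1) = 4 * a ^ 2 := by
    have h0 : ∑' k : ℕ, 2 * a ^ 2 * ((k : ℝ) + 1) * (1 / 2 : ℝ) ^ (k + 1)
        = ∑' k : ℕ, 2 * a ^ 2 * g (k + 1) := tsum_congr hterm
    rw [h0, tsum_mul_left]
    have hshift := Summable.tsum_eq_zero_add hgsum
    have hg0 : g 0 = 0 := by simp [hg_def]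
    rw [hgtsum, hg0, zero_add] at hshift
    rw [← hshift]
    ring
  have hnn : ∀ k : ℕ, 0 ≤ 2 * a ^ 2 * ((k : ℝ) + 1) * (1 / 2 : ℝ) ^ (k + 1) := by
    intro k; positivity
  have hlint : (∫⁻ l in Set.Ioi (0 : ℝ),
      ENNReal.ofReal ((ℙ {ω | X ω > l}).toReal * (2 * l))) ≤ ENNReal.ofReal (4 * a ^ 2) := by
    calc (∫⁻ l in Set.Ioi (0 : ℝ), ENNReal.ofReal ((ℙ {ω | X ω > l}).toReal * (2 * l)))
        ≤ ∫⁻ l in ⋃ k : ℕ, Set.Ico (a * k) (a * (k + 1 : ℕ)),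
            ENNReal.ofReal ((ℙ {ω | X ω > l}).toReal * (2 * l)) := lintegral_mono_set hsub
      _ ≤ ∑' k : ℕ, ∫⁻ l in Set.Ico (a * k) (a * (k + 1 : ℕ)),
            ENNReal.ofReal ((ℙ {ω | X ω > l}).toReal * (2 * l)) := lintegral_iUnion_le _ _
      _ ≤ ∑' k : ℕ, ENNReal.ofReal (2 * a ^ 2 * ((k : ℝ) + 1) * (1 / 2 : ℝ) ^ (k + 1)) :=
            ENNReal.tsum_le_tsum hpiece
      _ = ENNReal.ofReal (∑' k : ℕ, 2 * a ^ 2 * ((k : ℝ) + 1) * (1 / 2 : ℝ) ^ (k + 1)) :=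
            (ENNReal.ofReal_tsum_of_nonneg hnn hsummable).symm
      _ = ENNReal.ofReal (4 * a ^ 2) := by rw [htsum]
  have hfinal : ∫ l in Set.Ioi (0 : ℝ), (ℙ {ω | X ω > l}).toReal * (2 * l) ≤ 4 * a ^ 2 := by
    rw [key]
    exact ENNReal.toReal_le_of_le_ofReal (by positivity) hlint
  -- 4 a^2 < σX^2 / 2
  have h8p : (0 : ℝ) < Real.sqrt 8 := Real.sqrt_pos.mpr (by norm_num)
  have h8 : (Real.sqrt 8) ^ 2 = 8 := Real.sq_sqrt (by norm_num)
  have hc8 : c * Real.sqrt 8 < 1 := by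
    rw [lt_div_iff₀ h8p] at hc2; exact hc2
  have hcc : c ^ 2 < 1 / 8 := by nlinarith
  have hlast : 4 * a ^ 2 < σX ^ 2 / 2 := by
    rw [ha_def]
    nlinarith [mul_pos hσpos hσpos, sq_nonneg σX]
  linarith
end

section
/- Let (Ω, μ) be a probability space and A a finite set of functions, |A| > 1, which is t-separated in L_2(μ) (distinct elements are at L_2-distance at least t). Then there exists a point i ∈ Ω such that the variance of the random variable f ↦ f(i), where f is uniform on A, is at least t^2/4. -/
open MeasureTheory Finset

lemma alg_key {ι : Type*} (s : Finset ι) (hs : 0 < s.card) (a : ι → ℝ) :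
    ((s.card : ℝ))⁻¹ * ∑ i ∈ s, (a i - (s.card : ℝ)⁻¹ * ∑ j ∈ s, a j) ^ 2 =
      (2 * (s.card : ℝ) ^ 2)⁻¹ * ∑ i ∈ s, ∑ j ∈ s, (a i - a j) ^ 2 := by
  have hn : (s.card : ℝ) ≠ 0 := by positivity
  have hin : ∀ i, ∑ j ∈ s, (a i - a j) ^ 2
      = s.card * (a i) ^ 2 + ∑ j ∈ s, (a j) ^ 2 - 2 * a i * ∑ j ∈ s, a j := by
    intro i
    have : ∀ j ∈ s, (a i - a j) ^ 2 = (a i)^2 + (a j)^2 - 2 * a i * a j := by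
      intro j _; ring
    rw [Finset.sum_congr rfl this, Finset.sum_sub_distrib, Finset.sum_add_distrib,
      Finset.sum_const, nsmul_eq_mul, ← Finset.mul_sum]
  have h1 : ∑ i ∈ s, ∑ j ∈ s, (a i - a j) ^ 2
      = 2 * s.card * ∑ i ∈ s, (a i) ^ 2 - 2 * (∑ i ∈ s, a i) ^ 2 := by
    simp only [hin]
    rw [Finset.sum_sub_distrib, Finset.sum_add_distrib, ← Finset.mul_sum, Finset.sum_const,
      nsmul_eq_mul, ← Finset.sum_mul]
    rw [show (∑ i ∈ s, 2 * a i) = 2 * ∑ i ∈ s, a i by rw [Finset.mul_sum]]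
    ring
  have h2 : ∑ i ∈ s, (a i - (s.card : ℝ)⁻¹ * ∑ j ∈ s, a j) ^ 2
      = ∑ i ∈ s, (a i) ^ 2 - (s.card : ℝ)⁻¹ * (∑ i ∈ s, a i) ^ 2 := by
    have : ∀ i ∈ s, (a i - (s.card : ℝ)⁻¹ * ∑ j ∈ s, a j) ^ 2
        = (a i)^2 - 2 * (s.card : ℝ)⁻¹ * (∑ j ∈ s, a j) * a i
          + ((s.card : ℝ)⁻¹ * ∑ j ∈ s, a j)^2 := by intro i _; ring
    rw [Finset.sum_congr rfl this, Finset.sum_add_distrib, Finset.sum_sub_distrib,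
      Finset.sum_const, ← Finset.mul_sum, nsmul_eq_mul]
    field_simp
    ring
  rw [h1, h2]
  field_simp

theorem stmt_4 {Ω : Type*} [MeasurableSpace Ω] (μ : Measure Ω) [IsProbabilityMeasure μ]
    (A : Finset (Ω → ℝ)) (hA : 1 < A.card)
    (hmem : ∀ f ∈ A, MemLp f 2 μ)
    (t : ℝ) (ht : 0 < t)
    (hsep : ∀ f ∈ A, ∀ g ∈ A, f ≠ g → ∫ ω, (f ω - g ω) ^ 2 ∂μ ≥ t ^ 2) :
    ∃ i : Ω, ((A.card : ℝ))⁻¹ *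
        ∑ f ∈ A, (f i - (A.card : ℝ)⁻¹ * ∑ g ∈ A, g i) ^ 2 ≥ t ^ 2 / 4 := by
  classical
  by_contra hcon
  push_neg at hcon
  have hcard : 0 < A.card := by omega
  have hn2 : (2 : ℝ) ≤ A.card := by exact_mod_cast hA
  have hn : (A.card : ℝ) ≠ 0 := by positivity
  set V : Ω → ℝ := fun ω => (2 * (A.card : ℝ) ^ 2)⁻¹ * ∑ f ∈ A, ∑ g ∈ A, (f ω - g ω) ^ 2
    with hV
  have hInt : ∀ f ∈ A, ∀ g ∈ A, Integrable (fun ω => (f ω - g ω) ^ 2) μ := fun f hf g hg =>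
    ((hmem f hf).sub (hmem g hg)).integrable_sq
  have hVint : Integrable V μ := by
    exact (integrable_finset_sum A fun f hf =>
      integrable_finset_sum A fun g hg => hInt f hf g hg).const_mul _
  have hVval : ∫ ω, V ω ∂μ
      = (2 * (A.card : ℝ) ^ 2)⁻¹ * ∑ f ∈ A, ∑ g ∈ A, ∫ ω, (f ω - g ω) ^ 2 ∂μ := by
    rw [hV, MeasureTheory.integral_const_mul, integral_finset_sum A fun f hf =>
      integrable_finset_sum A fun g hg => hInt f hf g hg]
    congr 1
    exact Finset.sum_congr rfl fun f hf => integral_finset_sum A fun g hg => hInt f hf g hg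
  have hsum_lb : (A.card : ℝ) * ((A.card : ℝ) - 1) * t ^ 2
      ≤ ∑ f ∈ A, ∑ g ∈ A, ∫ ω, (f ω - g ω) ^ 2 ∂μ := by
    have h1 : ∀ f ∈ A, ((A.card : ℝ) - 1) * t ^ 2 ≤ ∑ g ∈ A, ∫ ω, (f ω - g ω) ^ 2 ∂μ := by
      intro f hf
      have h2 : ∑ g ∈ A.erase f, ∫ ω, (f ω - g ω) ^ 2 ∂μ
          ≤ ∑ g ∈ A, ∫ ω, (f ω - g ω) ^ 2 ∂μ :=
        Finset.sum_le_sum_of_subset_of_nonneg (Finset.erase_subset f A)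
          fun g hg _ => integral_nonneg fun ω => by positivity
      have h3 : ((A.card : ℝ) - 1) * t ^ 2 ≤ ∑ g ∈ A.erase f, ∫ ω, (f ω - g ω) ^ 2 ∂μ := by
        have := Finset.sum_le_sum (f := fun _ => t ^ 2)
          (g := fun g => ∫ ω, (f ω - g ω) ^ 2 ∂μ) (s := A.erase f)
          (fun g hg => hsep f hf g (Finset.mem_of_mem_erase hg)
            (Ne.symm (Finset.ne_of_mem_erase hg)))
        simpa [Finset.sum_const, Finset.card_erase_of_mem hf, nsmul_eq_mul,
          Nat.cast_sub hcard, mul_comm] using this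
      linarith
    calc (A.card : ℝ) * ((A.card : ℝ) - 1) * t ^ 2
        = ∑ _f ∈ A, ((A.card : ℝ) - 1) * t ^ 2 := by
          rw [Finset.sum_const, nsmul_eq_mul]; ring
      _ ≤ _ := Finset.sum_le_sum h1
  have hIV : t ^ 2 / 4 ≤ ∫ ω, V ω ∂μ := by
    rw [hVval]
    have h4 : t ^ 2 / 4 ≤ (2 * (A.card : ℝ) ^ 2)⁻¹ * ((A.card : ℝ) * ((A.card : ℝ) - 1) * t ^ 2) := by
      have e : (2 * (A.card : ℝ) ^ 2)⁻¹ * ((A.card : ℝ) * ((A.card : ℝ) - 1) * t ^ 2)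
          = ((A.card : ℝ) - 1) * t ^ 2 / (2 * (A.card : ℝ)) := by
        field_simp
      rw [e, div_le_div_iff₀ (by norm_num) (by positivity)]
      nlinarith [sq_nonneg t]
    calc t ^ 2 / 4 ≤ _ := h4
      _ ≤ _ := by
        apply mul_le_mul_of_nonneg_left hsum_lb (by positivity)
  have hlt : ∀ ω, V ω < t ^ 2 / 4 := by
    intro ω
    have := hcon ω
    rwa [alg_key A hcard (fun f => f ω)] at this
  have hint2 : Integrable (fun ω => t ^ 2 / 4 - V ω) μ := (integrable_const _).sub hVint
  have hnn : (0 : Ω → ℝ) ≤ᵐ[μ] fun ω => t ^ 2 / 4 - V ω :=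
    Filter.Eventually.of_forall fun ω => show (0:ℝ) ≤ t ^ 2 / 4 - V ω from
      sub_nonneg.2 (hlt ω).le
  have hpos : 0 < ∫ ω, (t ^ 2 / 4 - V ω) ∂μ := by
    rw [integral_pos_iff_support_of_nonneg_ae hnn hint2]
    have : Function.support (fun ω => t ^ 2 / 4 - V ω) = Set.univ := by
      ext ω; simp only [Function.mem_support, Set.mem_univ, iff_true]
      have := hlt ω; intro h; linarith [sub_eq_zero.mp h]
    rw [this]
    simp
  rw [integral_sub (integrable_const _) hVint, integral_const] at hpos
  simp at hpos
  linarith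
end

section
/- Let A be a finite class of functions on a probability space (Ω, μ) with |A| > 1 which is t-separated in L_2(μ). Then there exist a point i ∈ Ω, a real number a, and 0 < β ≤ 1/2 such that, setting N1 = |{f ∈ A : f(i) > a + t/12}| and N2 = |{f ∈ A : f(i) < a - t/12}|, either (N1 ≥ (1-β)|A| and N2 ≥ (β/2)|A|) or (N2 ≥ (1-β)|A| and N1 ≥ (β/2)|A|). -/
open MeasureTheory Finset

private lemma pair_sum_le {α : Type*} (A : Finset α) (a : α → ℝ) :
    ∑ f ∈ A, ∑ g ∈ A, (a f - a g)^2 ≤ 2 * A.card * ∑ f ∈ A, (a f)^2 := by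
  have key : ∑ f ∈ A, ∑ g ∈ A, (a f - a g)^2
      = 2 * A.card * ∑ f ∈ A, (a f)^2 - 2 * (∑ f ∈ A, a f)^2 := by
    have h : ∀ f ∈ A, ∑ g ∈ A, (a f - a g)^2
        = A.card * (a f)^2 + ∑ g ∈ A, (a g)^2 - 2 * a f * ∑ g ∈ A, a g := by
      intro f _
      have e : ∀ g, (a f - a g)^2 = (a f)^2 + (a g)^2 - 2 * a f * a g := by
        intro g; ring
      simp_rw [e]
      rw [Finset.sum_sub_distrib, Finset.sum_add_distrib, Finset.sum_const, nsmul_eq_mul,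
        ← Finset.mul_sum]
    rw [Finset.sum_congr rfl h, Finset.sum_sub_distrib, Finset.sum_add_distrib,
      Finset.sum_const, nsmul_eq_mul, ← Finset.mul_sum]
    have : ∑ f ∈ A, 2 * a f * ∑ g ∈ A, a g = 2 * (∑ f ∈ A, a f) * ∑ g ∈ A, a g := by
      rw [← Finset.sum_mul, ← Finset.mul_sum]
    rw [this]; ring
  nlinarith [sq_nonneg (∑ f ∈ A, a f)]

private lemma beta_ex (n B S M : ℕ) (hn : 0 < n) (hB : n ≤ 2*B) (hS : 1 ≤ S)
    (hpart : B + S + M = n) (hMS : M ≤ S) :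
    ∃ β : ℝ, 0 < β ∧ β ≤ 1/2 ∧ (B:ℝ) ≥ (1-β)*n ∧ (S:ℝ) ≥ β/2*n := by
  have hn' : (0:ℝ) < n := by exact_mod_cast hn
  refine ⟨((n:ℝ) - B)/n, ?_, ?_, ?_, ?_⟩
  · apply div_pos _ hn'
    have : (B:ℝ) + S + M = n := by exact_mod_cast hpart
    have hS' : (1:ℝ) ≤ S := by exact_mod_cast hS
    linarith [Nat.cast_nonneg (α := ℝ) M]
  · rw [div_le_iff₀ hn']
    have : (n:ℝ) ≤ 2*B := by exact_mod_cast hB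
    linarith
  · have : (1 - ((n:ℝ) - B)/n) * n = B := by field_simp; ring
    linarith [this.ge]
  · rw [ge_iff_le, div_div, div_mul_eq_mul_div, div_le_iff₀ (by linarith : (0:ℝ) < n*2)]
    have h1 : (B:ℝ) + S + M = n := by exact_mod_cast hpart
    have h2 : (M:ℝ) ≤ S := by exact_mod_cast hMS
    nlinarith

private lemma tri {α : Type*} (A : Finset α) (x : α → ℝ) (l r : ℝ) (hlr : l ≤ r) :
    (A.filter fun f => x f < l).card + (A.filter fun f => l ≤ x f ∧ x f ≤ r).card
      + (A.filter fun f => r < x f).card = A.card := by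
  have h1 := Finset.card_filter_add_card_filter_not (s := A) (p := fun f => x f < l)
  have h2 := Finset.card_filter_add_card_filter_not
    (s := A.filter fun f => ¬ x f < l) (p := fun f => x f ≤ r)
  have e1 : (A.filter fun f => ¬ x f < l).filter (fun f => x f ≤ r)
      = A.filter fun f => l ≤ x f ∧ x f ≤ r := by
    rw [Finset.filter_filter]; ext f; simp only [Finset.mem_filter, not_lt]; try tauto
  have e2 : (A.filter fun f => ¬ x f < l).filter (fun f => ¬ x f ≤ r)
      = A.filter fun f => r < x f := by
    rw [Finset.filter_filter]; ext f; simp only [Finset.mem_filter, not_lt, not_le]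
    constructor
    · rintro ⟨h, _, h3⟩; exact ⟨h, h3⟩
    · rintro ⟨h, h3⟩; exact ⟨h, le_trans hlr h3.le, h3⟩
  rw [e1, e2] at h2
  omega

private lemma core {α : Type*} (A : Finset α) (y : α → ℝ) (c : ℝ) (hc : 0 < c) (n : ℕ)
    (hn : 2 ≤ n)
    (hm : 2 * (A.filter fun f => 0 < y f).card ≤ n)
    (hsum : 18 * c^2 * n ≤ ∑ f ∈ A.filter (fun f => 0 < y f), (y f)^2) :
    ∃ a : ℝ, c < a ∧ 1 ≤ (A.filter fun f => a + c < y f).card ∧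
      (A.filter fun f => a - c ≤ y f ∧ y f ≤ a + c).card
        ≤ (A.filter fun f => a + c < y f).card := by
  by_contra hno
  push_neg at hno
  have hc2 : 0 < c^2 := by positivity
  have hEq2 : ∀ u : ℝ, ((A.filter fun f => u < y f).filter fun f => u + 2*c < y f)
      = A.filter fun f => u + 2*c < y f := by
    intro u
    rw [Finset.filter_filter]
    ext f
    simp only [Finset.mem_filter]
    constructor
    · rintro ⟨hfA, _, h2⟩; exact ⟨hfA, h2⟩
    · rintro ⟨hfA, h2⟩; exact ⟨hfA, by linarith, h2⟩
  have hcard : ∀ u : ℝ, (A.filter fun f => u + 2*c < y f).card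
      + ((A.filter fun f => u < y f).filter (fun f => ¬ (u + 2*c < y f))).card
      = (A.filter fun f => u < y f).card := by
    intro u
    have := Finset.card_filter_add_card_filter_not
      (s := A.filter fun f => u < y f) (fun f => u + 2*c < y f)
    rwa [hEq2 u] at this
  have hdouble : ∀ u : ℝ, 0 ≤ u → 1 ≤ (A.filter fun f => u + 2*c < y f).card →
      2 * (A.filter fun f => u + 2*c < y f).card + 1 ≤ (A.filter fun f => u < y f).card := by
    intro u hu h1
    have hne : (A.filter fun f => u + 2*c < y f).Nonempty := Finset.card_pos.mp h1
    obtain ⟨f₀, hf₀, hmin⟩ := Finset.exists_min_image _ y hne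
    have hv : u + 2*c < y f₀ := (Finset.mem_filter.mp hf₀).2
    set a : ℝ := u + c + (y f₀ - (u + 2*c))/2 with ha
    have hca : c < a := by simp only [ha]; linarith
    have hHeq : (A.filter fun f => a + c < y f) = (A.filter fun f => u + 2*c < y f) := by
      ext f
      simp only [Finset.mem_filter]
      constructor
      · rintro ⟨hfA, h⟩
        refine ⟨hfA, ?_⟩
        simp only [ha] at h; linarith
      · rintro ⟨hfA, h⟩
        have := hmin f (Finset.mem_filter.mpr ⟨hfA, h⟩)
        refine ⟨hfA, ?_⟩
        simp only [ha]; linarith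
    have h1' : 1 ≤ (A.filter fun f => a + c < y f).card := by rw [hHeq]; exact h1
    have hlt := hno a hca h1'
    rw [hHeq] at hlt
    have hMsub : (A.filter fun f => a - c ≤ y f ∧ y f ≤ a + c)
        ⊆ (A.filter fun f => u < y f).filter (fun f => ¬ (u + 2*c < y f)) := by
      intro f hf
      rw [Finset.mem_filter] at hf
      have hfA := hf.1
      have hf1 := hf.2.1
      have hf2 := hf.2.2
      refine Finset.mem_filter.mpr ⟨Finset.mem_filter.mpr ⟨hfA, ?_⟩, ?_⟩
      · simp only [ha] at hf1; linarith
      · intro hcon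
        have := hmin f (Finset.mem_filter.mpr ⟨hfA, hcon⟩)
        simp only [ha] at hf2; linarith
    have hM := Finset.card_le_card hMsub
    have := hcard u
    omega
  have hband : ∀ u : ℝ,
      ∑ f ∈ A.filter (fun f => u < y f), (y f - u)^2
      ≤ 4*c^2*(((A.filter fun f => u < y f).card : ℝ)
            - ((A.filter fun f => u + 2*c < y f).card : ℝ))
        + (4/3) * (∑ f ∈ A.filter (fun f => u + 2*c < y f), (y f - (u+2*c))^2)
        + 16*c^2 * ((A.filter fun f => u + 2*c < y f).card : ℝ) := by
    intro u
    have hsplit := Finset.sum_filter_add_sum_filter_not (A.filter fun f => u < y f)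
      (fun f => u + 2*c < y f) (fun f => (y f - u)^2)
    rw [hEq2 u] at hsplit
    have hlo : ∑ f ∈ (A.filter fun f => u < y f).filter (fun f => ¬ (u + 2*c < y f)), (y f - u)^2
        ≤ 4*c^2*(((A.filter fun f => u < y f).card : ℝ)
            - ((A.filter fun f => u + 2*c < y f).card : ℝ)) := by
      calc ∑ f ∈ (A.filter fun f => u < y f).filter (fun f => ¬ (u + 2*c < y f)), (y f - u)^2
          ≤ ∑ _f ∈ (A.filter fun f => u < y f).filter (fun f => ¬ (u + 2*c < y f)), 4*c^2 := by
            apply Finset.sum_le_sum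
            intro f hf
            rw [Finset.mem_filter, Finset.mem_filter] at hf
            have ha1 : u < y f := hf.1.2
            have ha2 : y f ≤ u + 2*c := by have := hf.2; push_neg at this; exact this
            nlinarith
        _ = 4*c^2*(((A.filter fun f => u < y f).card : ℝ)
            - ((A.filter fun f => u + 2*c < y f).card : ℝ)) := by
            rw [Finset.sum_const, nsmul_eq_mul]
            have h := hcard u
            have h' : ((((A.filter fun f => u < y f).filter
                (fun f => ¬ (u + 2*c < y f))).card : ℝ))
                = ((A.filter fun f => u < y f).card : ℝ)
                  - ((A.filter fun f => u + 2*c < y f).card : ℝ) := by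
              have hcast : ((A.filter fun f => u + 2*c < y f).card : ℝ)
                  + (((A.filter fun f => u < y f).filter
                    (fun f => ¬ (u + 2*c < y f))).card : ℝ)
                  = ((A.filter fun f => u < y f).card : ℝ) := by exact_mod_cast h
              linarith
            rw [h']; ring
    have hhi : ∑ f ∈ A.filter (fun f => u + 2*c < y f), (y f - u)^2
        ≤ (4/3) * (∑ f ∈ A.filter (fun f => u + 2*c < y f), (y f - (u+2*c))^2)
          + 16*c^2 * ((A.filter fun f => u + 2*c < y f).card : ℝ) := by
      calc ∑ f ∈ A.filter (fun f => u + 2*c < y f), (y f - u)^2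
          ≤ ∑ f ∈ A.filter (fun f => u + 2*c < y f), ((4/3) * (y f - (u+2*c))^2 + 16*c^2) := by
            apply Finset.sum_le_sum
            intro f hf
            nlinarith [sq_nonneg (y f - u - 8*c)]
        _ = (4/3) * (∑ f ∈ A.filter (fun f => u + 2*c < y f), (y f - (u+2*c))^2)
          + 16*c^2 * ((A.filter fun f => u + 2*c < y f).card : ℝ) := by
            rw [Finset.sum_add_distrib, Finset.sum_const, nsmul_eq_mul, ← Finset.mul_sum]
            ring
    linarith [hsplit, hlo, hhi]
  have claim : ∀ N : ℕ, ∀ u : ℝ, 0 ≤ u → (A.filter fun f => u < y f).card ≤ N →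
      ∑ f ∈ A.filter (fun f => u < y f), (y f - u)^2
        ≤ 36 * c^2 * ((A.filter fun f => u < y f).card : ℝ) := by
    intro N
    induction N with
    | zero =>
      intro u _ hD0
      rw [Nat.le_zero] at hD0
      rw [Finset.card_eq_zero.mp hD0]
      simp
    | succ N ih =>
      intro u hu hDle
      have hb := hband u
      by_cases h1 : 1 ≤ (A.filter fun f => u + 2*c < y f).card
      · have hdl := hdouble u hu h1
        have hle' : (A.filter fun f => u + 2*c < y f).card ≤ N := by omega
        have hIH := ih (u + 2*c) (by linarith) hle'
        have hdl' : 2 * ((A.filter fun f => u + 2*c < y f).card : ℝ) + 1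
            ≤ ((A.filter fun f => u < y f).card : ℝ) := by exact_mod_cast hdl
        nlinarith [mul_nonneg hc2.le
            (Nat.cast_nonneg (α := ℝ) (A.filter fun f => u + 2*c < y f).card),
          mul_nonneg hc2.le (by linarith : (0:ℝ) ≤ ((A.filter fun f => u < y f).card : ℝ)
            - (2 * ((A.filter fun f => u + 2*c < y f).card : ℝ) + 1))]
      · have hD'0 : (A.filter fun f => u + 2*c < y f) = ∅ := by
          rw [← Finset.card_eq_zero]; omega
        rw [hD'0] at hb
        simp only [Finset.sum_empty, Finset.card_empty, Nat.cast_zero] at hb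
        nlinarith [mul_nonneg hc2.le
          (Nat.cast_nonneg (α := ℝ) (A.filter fun f => u < y f).card)]
  have hb0 := hband 0
  have hS0 : ∑ f ∈ A.filter (fun f => (0:ℝ) < y f), (y f - 0)^2
      = ∑ f ∈ A.filter (fun f => 0 < y f), (y f)^2 :=
    Finset.sum_congr rfl (fun f _ => by rw [sub_zero])
  have hm' : 2 * ((A.filter fun f => 0 < y f).card : ℝ) ≤ (n:ℝ) := by exact_mod_cast hm
  have hn' : (2:ℝ) ≤ (n:ℝ) := by exact_mod_cast hn
  by_cases h1 : 1 ≤ (A.filter fun f => (0:ℝ) + 2*c < y f).card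
  · have hdl := hdouble 0 le_rfl h1
    have hIH := claim ((A.filter fun f => (0:ℝ) + 2*c < y f).card) ((0:ℝ) + 2*c)
      (by linarith) le_rfl
    have hdl' : 2 * ((A.filter fun f => (0:ℝ) + 2*c < y f).card : ℝ) + 1
        ≤ ((A.filter fun f => (0:ℝ) < y f).card : ℝ) := by exact_mod_cast hdl
    rw [hS0] at hb0
    nlinarith [mul_nonneg hc2.le
      (Nat.cast_nonneg (α := ℝ) (A.filter fun f => (0:ℝ) + 2*c < y f).card)]
  · have hD'0 : (A.filter fun f => (0:ℝ) + 2*c < y f) = ∅ := by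
      rw [← Finset.card_eq_zero]; omega
    rw [hD'0] at hb0
    simp only [Finset.sum_empty, Finset.card_empty, Nat.cast_zero] at hb0
    rw [hS0] at hb0
    nlinarith

private lemma exists_pt {Ω : Type*} [MeasurableSpace Ω] (μ : Measure Ω) [IsProbabilityMeasure μ]
    (A : Finset (Ω → ℝ)) (hA : 1 < A.card)
    (hmem : ∀ f ∈ A, MemLp f 2 μ)
    (t : ℝ)
    (hsep : ∀ f ∈ A, ∀ g ∈ A, f ≠ g → ∫ ω, (f ω - g ω) ^ 2 ∂μ ≥ t ^ 2) :
    ∃ ω : Ω, (A.card : ℝ) * ((A.card : ℝ) - 1) * t^2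
      ≤ ∑ f ∈ A, ∑ g ∈ A, (f ω - g ω)^2 := by
  classical
  set n := A.card with hn
  set R : ℝ := (n : ℝ) * ((n : ℝ) - 1) * t^2 with hR
  have hint : ∀ f ∈ A, ∀ g ∈ A, Integrable (fun ω => (f ω - g ω)^2) μ := by
    intro f hf g hg
    exact ((hmem f hf).sub (hmem g hg)).integrable_sq
  have hint2 : ∀ f ∈ A, Integrable (fun ω => ∑ g ∈ A, (f ω - g ω)^2) μ := by
    intro f hf
    exact integrable_finset_sum _ (fun g hg => hint f hf g hg)
  have hQint : Integrable (fun ω => ∑ f ∈ A, ∑ g ∈ A, (f ω - g ω)^2) μ :=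
    integrable_finset_sum _ hint2
  have hlow : R ≤ ∫ ω, ∑ f ∈ A, ∑ g ∈ A, (f ω - g ω)^2 ∂μ := by
    rw [integral_finset_sum _ hint2]
    have hrow : ∀ f ∈ A, ((n:ℝ) - 1) * t^2 ≤ ∫ ω, ∑ g ∈ A, (f ω - g ω)^2 ∂μ := by
      intro f hf
      rw [integral_finset_sum _ (fun g hg => hint f hf g hg)]
      rw [← Finset.add_sum_erase A _ hf]
      have hdiag : ∫ ω, (f ω - f ω)^2 ∂μ = 0 := by simp
      rw [hdiag, zero_add]
      have hterm : ∀ g ∈ A.erase f, t^2 ≤ ∫ ω, (f ω - g ω)^2 ∂μ := by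
        intro g hg
        exact hsep f hf g (Finset.mem_of_mem_erase hg) (Finset.ne_of_mem_erase hg).symm
      calc ((n:ℝ) - 1) * t^2 = ((A.erase f).card : ℝ) * t^2 := by
            rw [Finset.card_erase_of_mem hf]
            have h1 : 1 ≤ n := le_of_lt hA
            rw [Nat.cast_sub (show 1 ≤ A.card from h1), ← hn]; push_cast
            ring
        _ ≤ ∑ g ∈ A.erase f, ∫ ω, (f ω - g ω)^2 ∂μ := by
            rw [mul_comm]
            exact Finset.card_nsmul_le_sum _ _ _ hterm
              |>.trans_eq' (by rw [nsmul_eq_mul]; ring) |>.trans_eq (by rfl)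
    calc R = ∑ _f ∈ A, ((n:ℝ) - 1) * t^2 := by
          rw [Finset.sum_const, nsmul_eq_mul, hR]; ring
      _ ≤ ∑ f ∈ A, ∫ ω, ∑ g ∈ A, (f ω - g ω)^2 ∂μ := Finset.sum_le_sum hrow
  by_contra hcon
  push_neg at hcon
  have hle : ∫ ω, ∑ f ∈ A, ∑ g ∈ A, (f ω - g ω)^2 ∂μ ≤ R := by
    calc ∫ ω, ∑ f ∈ A, ∑ g ∈ A, (f ω - g ω)^2 ∂μ ≤ ∫ _ω, R ∂μ :=
          integral_mono hQint (integrable_const R) (fun ω => (hcon ω).le)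
      _ = R := by simp
  have heq : ∫ ω, (R - ∑ f ∈ A, ∑ g ∈ A, (f ω - g ω)^2) ∂μ = 0 := by
    rw [integral_sub (integrable_const R) hQint]
    simp only [integral_const, measure_univ, ENNReal.toReal_one, probReal_univ, one_smul, smul_eq_mul, one_mul]
    linarith
  have h0 : (fun ω => R - ∑ f ∈ A, ∑ g ∈ A, (f ω - g ω)^2) =ᵐ[μ] 0 :=
    (integral_eq_zero_iff_of_nonneg (fun ω => by simpa using (hcon ω).le)
      ((integrable_const R).sub hQint)).mp heq
  have hne : (ae μ).NeBot := ae_neBot.mpr (IsProbabilityMeasure.ne_zero μ)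
  obtain ⟨ω, hω⟩ := h0.exists
  simp only [Pi.zero_apply] at hω
  have := hcon ω
  linarith [sub_eq_zero.mp hω]
theorem stmt_5 {Ω : Type*} [MeasurableSpace Ω] (μ : Measure Ω) [IsProbabilityMeasure μ]
    (A : Finset (Ω → ℝ)) (hA : 1 < A.card)
    (hmem : ∀ f ∈ A, MemLp f 2 μ)
    (t : ℝ) (ht : 0 < t)
    (hsep : ∀ f ∈ A, ∀ g ∈ A, f ≠ g → ∫ ω, (f ω - g ω) ^ 2 ∂μ ≥ t ^ 2) :
    ∃ (i : Ω) (a β : ℝ), 0 < β ∧ β ≤ 1 / 2 ∧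
      ((({f ∈ A | f i > a + t / 12}.card : ℝ) ≥ (1 - β) * A.card ∧
        ({f ∈ A | f i < a - t / 12}.card : ℝ) ≥ (β / 2) * A.card) ∨
       (({f ∈ A | f i < a - t / 12}.card : ℝ) ≥ (1 - β) * A.card ∧
        ({f ∈ A | f i > a + t / 12}.card : ℝ) ≥ (β / 2) * A.card)) := by
  classical
  obtain ⟨ω, hω⟩ := exists_pt μ A hA hmem t hsep
  set c : ℝ := t/12 with hcdef
  clear_value c
  have hc : 0 < c := by rw [hcdef]; positivity
  have hc2 : 0 < c^2 := by positivity
  have hn2 : 2 ≤ A.card := hA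
  have hnR : (2:ℝ) ≤ (A.card:ℝ) := by exact_mod_cast hn2
  have hn0 : (0:ℝ) < (A.card:ℝ) := by linarith
  -- median
  have hAne : A.Nonempty := Finset.card_pos.mp (by omega)
  obtain ⟨fmax, hfmaxA, hfmax⟩ := Finset.exists_max_image A (fun f => f ω) hAne
  have hTne : (A.filter (fun f => A.card ≤ 2 * (A.filter fun g => g ω ≤ f ω).card)).Nonempty := by
    refine ⟨fmax, Finset.mem_filter.mpr ⟨hfmaxA, ?_⟩⟩
    have : A.filter (fun g => g ω ≤ fmax ω) = A :=
      Finset.filter_true_of_mem (fun g hg => hfmax g hg)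
    rw [this]; omega
  obtain ⟨fm, hfmT, hfmmin⟩ := Finset.exists_min_image _ (fun f => f ω) hTne
  set med := fm ω with hmed
  clear_value med
  have h1 : A.card ≤ 2 * (A.filter fun g => g ω ≤ med).card := by
    rw [hmed]; exact (Finset.mem_filter.mp hfmT).2
  have h2 : A.card ≤ 2 * (A.filter fun g => med ≤ g ω).card := by
    by_contra hcon2
    push_neg at hcon2
    have hpart := Finset.card_filter_add_card_filter_not (s := A)
      (p := fun g => med ≤ g ω)
    have hltne : (A.filter fun g => ¬ med ≤ g ω).Nonempty := Finset.card_pos.mp (by linarith)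
    obtain ⟨g', hg'mem, hg'max⟩ := Finset.exists_max_image _ (fun f => f ω) hltne
    have hg'A : g' ∈ A := (Finset.mem_filter.mp hg'mem).1
    have hsub : (A.filter fun g => ¬ med ≤ g ω) ⊆ A.filter (fun g => g ω ≤ g' ω) := by
      intro h hh
      exact Finset.mem_filter.mpr ⟨(Finset.mem_filter.mp hh).1, hg'max h hh⟩
    have hcardle := Finset.card_le_card hsub
    have hg'T : g' ∈ A.filter (fun f => A.card ≤ 2 * (A.filter fun g => g ω ≤ f ω).card) :=
      Finset.mem_filter.mpr ⟨hg'A, by linarith⟩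
    have hmle := hfmmin g' hg'T
    have hg'lt : g' ω < med := not_le.mp (Finset.mem_filter.mp hg'mem).2
    linarith
  -- total second moment of shifted values
  have hpair2 : ∑ f ∈ A, ∑ g ∈ A, (f ω - g ω)^2
      = ∑ f ∈ A, ∑ g ∈ A, ((f ω - med) - (g ω - med))^2 := by
    refine Finset.sum_congr rfl (fun f _ => Finset.sum_congr rfl (fun g _ => by ring))
  have hps := pair_sum_le A (fun f => f ω - med)
  have h144 : t^2 = 144*c^2 := by rw [hcdef]; ring
  rw [h144] at hω
  have hkey : 144*c^2*((A.card:ℝ))*((A.card:ℝ)-1)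
      ≤ 2*(A.card:ℝ)*∑ f ∈ A, (f ω - med)^2 := by
    rw [hpair2] at hω
    calc 144*c^2*((A.card:ℝ))*((A.card:ℝ)-1)
        = (A.card:ℝ)*((A.card:ℝ)-1)*(144*c^2) := by ring
      _ ≤ ∑ f ∈ A, ∑ g ∈ A, ((f ω - med) - (g ω - med))^2 := hω
      _ ≤ 2*(A.card:ℝ)*∑ f ∈ A, (f ω - med)^2 := hps
  have htot : 36*c^2*(A.card:ℝ) ≤ ∑ f ∈ A, (f ω - med)^2 := by
    nlinarith [mul_nonneg (mul_nonneg hc2.le hn0.le) (by linarith : (0:ℝ) ≤ (A.card:ℝ) - 2)]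
  -- split into positive and negative parts
  have hsplitPQ := Finset.sum_filter_add_sum_filter_not A (fun f => (0:ℝ) < f ω - med)
    (fun f => (f ω - med)^2)
  have hQeq : ∑ f ∈ A.filter (fun f => ¬ ((0:ℝ) < f ω - med)), (f ω - med)^2
      = ∑ f ∈ A.filter (fun f => (0:ℝ) < med - f ω), (med - f ω)^2 := by
    have hs2 := Finset.sum_filter_add_sum_filter_not
      (A.filter fun f => ¬ ((0:ℝ) < f ω - med)) (fun f => (0:ℝ) < med - f ω)
      (fun f => (f ω - med)^2)
    have ez : ∑ f ∈ (A.filter fun f => ¬ ((0:ℝ) < f ω - med)).filter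
        (fun f => ¬ ((0:ℝ) < med - f ω)), (f ω - med)^2 = 0 := by
      apply Finset.sum_eq_zero
      intro f hf
      rw [Finset.mem_filter, Finset.mem_filter] at hf
      have h1f := hf.1.2
      have h2f := hf.2
      push_neg at h1f h2f
      have : f ω - med = 0 := by linarith
      rw [this]; norm_num
    have efil : (A.filter fun f => ¬ ((0:ℝ) < f ω - med)).filter (fun f => (0:ℝ) < med - f ω)
        = A.filter (fun f => (0:ℝ) < med - f ω) := by
      rw [Finset.filter_filter]
      ext f
      simp only [Finset.mem_filter]
      constructor
      · rintro ⟨hfA, _, h3⟩; exact ⟨hfA, h3⟩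
      · rintro ⟨hfA, h3⟩; exact ⟨hfA, by intro hcon; linarith, h3⟩
    rw [efil, ez, add_zero] at hs2
    rw [← hs2]
    exact Finset.sum_congr rfl (fun f _ => by ring)
  rw [hQeq] at hsplitPQ
  -- count bounds for positive / negative parts
  have hmpos : 2 * (A.filter fun f => (0:ℝ) < f ω - med).card ≤ A.card := by
    have e : A.filter (fun f => (0:ℝ) < f ω - med) = A.filter (fun f => ¬ (f ω ≤ med)) := by
      ext f
      simp only [Finset.mem_filter, not_le]
      constructor
      · rintro ⟨hfA, hh⟩; exact ⟨hfA, by linarith⟩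
      · rintro ⟨hfA, hh⟩; exact ⟨hfA, by linarith⟩
    have hfc := Finset.card_filter_add_card_filter_not (s := A)
      (p := fun f => f ω ≤ med)
    rw [e]; linarith
  have hmneg : 2 * (A.filter fun f => (0:ℝ) < med - f ω).card ≤ A.card := by
    have e : A.filter (fun f => (0:ℝ) < med - f ω) = A.filter (fun f => ¬ (med ≤ f ω)) := by
      ext f
      simp only [Finset.mem_filter, not_le]
      constructor
      · rintro ⟨hfA, hh⟩; exact ⟨hfA, by linarith⟩
      · rintro ⟨hfA, hh⟩; exact ⟨hfA, by linarith⟩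
    have hfc := Finset.card_filter_add_card_filter_not (s := A)
      (p := fun f => med ≤ f ω)
    rw [e]; linarith
  rcases le_or_gt (18*c^2*(A.card:ℝ)) (∑ f ∈ A.filter (fun f => (0:ℝ) < f ω - med),
      (f ω - med)^2) with hP | hP
  · -- positive side heavy : second disjunct
    obtain ⟨a, hca, hH1, hMH⟩ := core A (fun f => f ω - med) c hc A.card hn2 hmpos hP
    refine ⟨ω, med + a, ?_⟩
    have eS1 : A.filter (fun f => f ω > med + a + c)
        = A.filter (fun f => a + c < f ω - med) := by
      ext f
      simp only [Finset.mem_filter, gt_iff_lt]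
      constructor
      · rintro ⟨hfA, hh⟩; exact ⟨hfA, by linarith⟩
      · rintro ⟨hfA, hh⟩; exact ⟨hfA, by linarith⟩
    have eS1' : A.filter (fun f => med + a + c < f ω)
        = A.filter (fun f => f ω > med + a + c) := by
      ext f; simp only [Finset.mem_filter, gt_iff_lt]
    have eM : A.filter (fun f => med + a - c ≤ f ω ∧ f ω ≤ med + a + c)
        = A.filter (fun f => a - c ≤ f ω - med ∧ f ω - med ≤ a + c) := by
      ext f
      simp only [Finset.mem_filter]
      constructor
      · rintro ⟨hfA, hh1, hh2⟩; exact ⟨hfA, by linarith, by linarith⟩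
      · rintro ⟨hfA, hh1, hh2⟩; exact ⟨hfA, by linarith, by linarith⟩
    have htri := tri A (fun f => f ω) (med + a - c) (med + a + c)
      (by linarith)
    beta_reduce at htri
    have c1 : 1 ≤ (A.filter (fun f => f ω > med + a + c)).card := by
      rw [eS1]; exact hH1
    have cMH : (A.filter (fun f => med + a - c ≤ f ω ∧ f ω ≤ med + a + c)).card
        ≤ (A.filter (fun f => f ω > med + a + c)).card := by
      rw [eS1, eM]; exact hMH
    have hbig : A.card ≤ 2 * (A.filter fun f => f ω < med + a - c).card := by
      have hsub : A.filter (fun g => g ω ≤ med) ⊆ A.filter (fun f => f ω < med + a - c) := by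
        intro f hf
        rw [Finset.mem_filter] at hf ⊢
        refine ⟨hf.1, ?_⟩
        have hfm : f ω ≤ med := hf.2
        linarith
      have := Finset.card_le_card hsub
      linarith
    rw [eS1'] at c1 cMH
    obtain ⟨β, hβ1, hβ2, hβ3, hβ4⟩ := beta_ex A.card
      (A.filter (fun f => f ω < med + a - c)).card
      (A.filter (fun f => f ω > med + a + c)).card
      (A.filter (fun f => med + a - c ≤ f ω ∧ f ω ≤ med + a + c)).card
      (by linarith) hbig c1 (by rw [← eS1']; linarith) cMH
    exact ⟨β, hβ1, hβ2, Or.inr ⟨hβ3, hβ4⟩⟩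
  · -- negative side heavy : first disjunct
    have hQ : 18*c^2*(A.card:ℝ) ≤ ∑ f ∈ A.filter (fun f => (0:ℝ) < med - f ω),
        (med - f ω)^2 := by linarith
    obtain ⟨a, hca, hH1, hMH⟩ := core A (fun f => med - f ω) c hc A.card hn2 hmneg hQ
    refine ⟨ω, med - a, ?_⟩
    have eS2 : A.filter (fun f => f ω < med - a - c)
        = A.filter (fun f => a + c < med - f ω) := by
      ext f
      simp only [Finset.mem_filter]
      constructor
      · rintro ⟨hfA, hh⟩; exact ⟨hfA, by linarith⟩
      · rintro ⟨hfA, hh⟩; exact ⟨hfA, by linarith⟩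
    have eM : A.filter (fun f => med - a - c ≤ f ω ∧ f ω ≤ med - a + c)
        = A.filter (fun f => a - c ≤ med - f ω ∧ med - f ω ≤ a + c) := by
      ext f
      simp only [Finset.mem_filter]
      constructor
      · rintro ⟨hfA, hh1, hh2⟩; exact ⟨hfA, by linarith, by linarith⟩
      · rintro ⟨hfA, hh1, hh2⟩; exact ⟨hfA, by linarith, by linarith⟩
    have eS1' : A.filter (fun f => med - a + c < f ω)
        = A.filter (fun f => f ω > med - a + c) := by
      ext f; simp only [Finset.mem_filter, gt_iff_lt]
    have htri := tri A (fun f => f ω) (med - a - c) (med - a + c)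
      (by linarith)
    beta_reduce at htri
    have c1 : 1 ≤ (A.filter (fun f => f ω < med - a - c)).card := by
      rw [eS2]; exact hH1
    have cMH : (A.filter (fun f => med - a - c ≤ f ω ∧ f ω ≤ med - a + c)).card
        ≤ (A.filter (fun f => f ω < med - a - c)).card := by
      rw [eS2, eM]; exact hMH
    have hbig : A.card ≤ 2 * (A.filter fun f => f ω > med - a + c).card := by
      have hsub : A.filter (fun g => med ≤ g ω) ⊆ A.filter (fun f => f ω > med - a + c) := by
        intro f hf
        rw [Finset.mem_filter] at hf ⊢
        refine ⟨hf.1, ?_⟩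
        have hfm : med ≤ f ω := hf.2
        simp only [gt_iff_lt]
        linarith
      have := Finset.card_le_card hsub
      linarith
    obtain ⟨β, hβ1, hβ2, hβ3, hβ4⟩ := beta_ex A.card
      (A.filter (fun f => f ω > med - a + c)).card
      (A.filter (fun f => f ω < med - a - c)).card
      (A.filter (fun f => med - a - c ≤ f ω ∧ f ω ≤ med - a + c)).card
      (by linarith) hbig c1 (by rw [← eS1']; linarith) cMH
    exact ⟨β, hβ1, hβ2, Or.inl ⟨hβ3, hβ4⟩⟩
end

section
/- Let A be a finite class of integer-valued functions on a probability space (Ω, μ), |A| ≥ 2, which is 6-separated in L_2(μ). Then A shatters at least |A|^{1/2} centers. -/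
open MeasureTheory

variable {Ω : Type*}

/-- `A` shatters the center `(σ, h)`. (For `σ = ∅` this is the trivial center,
shattered iff `A` is nonempty.) -/
def ShattersCenter (A : Finset (Ω → ℤ)) (σ : Finset Ω) (h : Ω → ℤ) : Prop :=
  A.Nonempty ∧ ∀ θ : Ω → Bool, ∃ f ∈ A, ∀ i ∈ σ,
    (θ i = true → f i > h i) ∧ (θ i = false → f i < h i)

/-- The set of centers shattered by `A`, level functions being supported on `σ`. -/
def shatteredCenters (A : Finset (Ω → ℤ)) : Set (Finset Ω × (Ω → ℤ)) :=
  {p | (∀ i ∉ p.1, p.2 i = 0) ∧ ShattersCenter A p.1 p.2}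

section Aux

open Finset


open Finset

lemma series_aux (K : ℕ) :
    ∑ k ∈ Finset.Icc 1 K, (k : ℝ)^2 / 4^k ≤ 1 - ((K:ℝ)^2 + 2*K + 2)/(2*4^K) := by
  induction K with
  | zero => norm_num
  | succ K ih =>
      rw [Finset.sum_Icc_succ_top (by norm_num)]
      have h4 : (0:ℝ) < 4^K := by positivity
      have h42 : (0:ℝ) < 4^(K*2) := by positivity
      have key : ((K:ℝ)+1)^2 / 4^(K+1) + (((K:ℝ)+1)^2 + 2*((K:ℝ)+1) + 2)/(2*4^(K+1))
          ≤ ((K:ℝ)^2 + 2*K + 2)/(2*4^K) := by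
        rw [pow_succ]
        rw [div_add_div _ _ (by positivity) (by positivity),
          div_le_div_iff₀ (by positivity) (by positivity)]
        ring_nf
        nlinarith [mul_nonneg (sq_nonneg (K:ℝ)) h42.le, h42]
      push_cast
      linarith


open Finset

lemma filter_neg_card_split {α : Type*} (A : Finset α) (p q : α → Prop)
    [DecidablePred p] [DecidablePred q] (hpq : ∀ f ∈ A, (¬ p f) ↔ q f) :
    (A.filter p).card + (A.filter q).card = A.card := by
  have h1 : A.filter (fun f => ¬ p f) = A.filter q := Finset.filter_congr hpq
  rw [← h1]
  exact Finset.card_filter_add_card_filter_not p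

lemma tail_bound {α : Type*} (A : Finset α) (v : α → ℤ) (c : ℤ)
    (hn : 2 ≤ A.card)
    (hbad : ∀ h : ℤ, 1 ≤ (A.filter fun f => v f < h).card →
      1 ≤ (A.filter fun f => h < v f).card →
      4 * (A.filter fun f => v f < h).card * (A.filter fun f => h < v f).card
        < (A.filter fun f => v f = h).card ^ 2)
    (h1 : 2 * (A.filter fun f => c + 1 ≤ v f).card ≤ A.card) :
    ∀ k : ℕ, 1 ≤ k → (A.filter fun f => c + k ≤ v f).card * 4 ^ k ≤ 2 * A.card := by
  set n := A.card with hndef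
  have hmono : ∀ k : ℕ, 1 ≤ k →
      (A.filter fun f => c + k ≤ v f).card ≤ (A.filter fun f => c + 1 ≤ v f).card := by
    intro k hk
    apply Finset.card_le_card
    intro f hf
    simp only [Finset.mem_filter] at hf ⊢
    refine ⟨hf.1, ?_⟩
    have : (1:ℤ) ≤ (k:ℤ) := by exact_mod_cast hk
    omega
  have hrec : ∀ k : ℕ, 1 ≤ k →
      2 * n * (A.filter fun f => c + (k+1:ℕ) ≤ v f).card
        ≤ (A.filter fun f => c + k ≤ v f).card ^ 2 := by
    intro k hk
    set t := (A.filter fun f => c + k ≤ v f).card with htdef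
    set t' := (A.filter fun f => c + (k+1:ℕ) ≤ v f).card with ht'def
    rcases Nat.eq_zero_or_pos t' with h0 | hpos
    · simp [h0]
    have hat : (A.filter fun f => v f < c + k).card + t = n := by
      rw [htdef, hndef]
      exact filter_neg_card_split A _ _ (fun f _ => by simp [not_lt])
    set a := (A.filter fun f => v f < c + k).card with hadef
    have h2t : 2 * t ≤ n := le_trans (by have := hmono k hk; omega) h1
    have ha1 : 1 ≤ a := by omega
    have hb : (A.filter fun f => (c + (k:ℤ)) < v f).card = t' := by
      rw [ht'def]
      congr 1
      apply Finset.filter_congr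
      intro f _
      push_cast
      constructor <;> intro hh <;> omega
    have hlt : (A.filter fun f => v f = c + k).card + t' = t := by
      rw [ht'def, htdef]
      have e1 : A.filter (fun f => v f = c + (k:ℤ))
          = (A.filter fun f => c + (k:ℤ) ≤ v f).filter (fun f => v f = c + (k:ℤ)) := by
        rw [Finset.filter_filter]
        apply Finset.filter_congr
        intro f _
        constructor
        · intro hh; exact ⟨le_of_eq hh.symm, hh⟩
        · exact fun hh => hh.2
      have e2 : A.filter (fun f => c + ((k+1:ℕ):ℤ) ≤ v f)
          = (A.filter fun f => c + (k:ℤ) ≤ v f).filter (fun f => ¬ (v f = c + (k:ℤ))) := by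
        rw [Finset.filter_filter]
        apply Finset.filter_congr
        intro f _
        push_cast
        constructor
        · intro hh; constructor <;> omega
        · intro hh; omega
      rw [e1, e2]
      exact Finset.card_filter_add_card_filter_not (fun f => v f = c + (k:ℤ))
    have hbad' := hbad (c + k)
    rw [hb] at hbad'
    have hb4 : 4 * a * t' < (A.filter fun f => v f = c + k).card ^ 2 := hbad' ha1 hpos
    have hl_le : (A.filter fun f => v f = c + k).card ≤ t := by omega
    calc 2 * n * t' = 2 * (a + t) * t' := by rw [hat]
      _ ≤ 2 * (a + a) * t' := by
          apply Nat.mul_le_mul_right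
          apply Nat.mul_le_mul_left
          omega
      _ = 4 * a * t' := by ring
      _ ≤ (A.filter fun f => v f = c + k).card ^ 2 := le_of_lt hb4
      _ ≤ t ^ 2 := Nat.pow_le_pow_left hl_le 2
  intro k hk
  induction k with
  | zero => omega
  | succ k ih =>
      rcases Nat.eq_zero_or_pos k with rfl | hk1
      · simp only [Nat.cast_add, Nat.cast_zero, Nat.cast_one, zero_add, pow_one]
        omega
      · have ihk := ih hk1
        have hr := hrec k hk1
        have hnpos : 0 < 2 * n := by omega
        have key : (2*n) * ((A.filter fun f => c + (k+1:ℕ) ≤ v f).card * 4 ^ (k+1))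
            ≤ (2*n) * (2*n) := by
          calc (2*n) * ((A.filter fun f => c + (k+1:ℕ) ≤ v f).card * 4 ^ (k+1))
              = (2 * n * (A.filter fun f => c + (k+1:ℕ) ≤ v f).card) * 4 ^ (k+1) := by ring
            _ ≤ (A.filter fun f => c + k ≤ v f).card ^ 2 * 4 ^ (k+1) :=
                Nat.mul_le_mul_right _ hr
            _ ≤ (A.filter fun f => c + k ≤ v f).card ^ 2 * (4 ^ k * 4 ^ k) := by
                apply Nat.mul_le_mul_left
                have h4k : 4 ≤ 4 ^ k := by
                  calc 4 = 4 ^ 1 := (pow_one 4).symm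
                  _ ≤ 4 ^ k := Nat.pow_le_pow_right (by norm_num) hk1
                calc 4 ^ (k+1) = 4 ^ k * 4 := by ring
                  _ ≤ 4 ^ k * 4 ^ k := Nat.mul_le_mul_left _ h4k
            _ = ((A.filter fun f => c + k ≤ v f).card * 4 ^ k) ^ 2 := by ring
            _ ≤ (2*n) ^ 2 := Nat.pow_le_pow_left ihk 2
            _ = (2*n) * (2*n) := by ring
        exact Nat.le_of_mul_le_mul_left key hnpos

lemma exists_median {α : Type*} (A : Finset α) (v : α → ℤ) (hA : A.Nonempty) :
    ∃ c : ℤ, 2 * (A.filter fun f => c + 1 ≤ v f).card ≤ A.card ∧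
      2 * (A.filter fun f => v f ≤ c - 1).card ≤ A.card := by
  have himg : (A.image v).Nonempty := hA.image v
  have hex : ∃ z : ℤ, A.card ≤ 2 * (A.filter fun f => v f ≤ z).card := by
    refine ⟨(A.image v).max' himg, ?_⟩
    have hfull : A.filter (fun f => v f ≤ (A.image v).max' himg) = A := by
      apply Finset.filter_true_of_mem
      intro f hf
      exact Finset.le_max' _ _ (Finset.mem_image_of_mem v hf)
    rw [hfull]; omega
  have hbdd : ∃ b : ℤ, ∀ z : ℤ, A.card ≤ 2 * (A.filter fun f => v f ≤ z).card → b ≤ z := by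
    refine ⟨(A.image v).min' himg, ?_⟩
    intro z hz
    by_contra hlt
    push_neg at hlt
    have hemp : A.filter (fun f => v f ≤ z) = ∅ := by
      apply Finset.filter_false_of_mem
      intro f hf
      have := Finset.min'_le (A.image v) (v f) (Finset.mem_image_of_mem v hf)
      omega
    rw [hemp] at hz
    simp only [Finset.card_empty, Nat.mul_zero, Nat.le_zero] at hz
    have := Finset.card_pos.mpr hA
    omega
  obtain ⟨c, hc, hmin⟩ := Int.exists_least_of_bdd hbdd hex
  refine ⟨c, ?_, ?_⟩
  · have hpart : (A.filter fun f => v f ≤ c).card + (A.filter fun f => c + 1 ≤ v f).card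
        = A.card := filter_neg_card_split A _ _ (fun f _ => by constructor <;> intro <;> omega)
    omega
  · by_contra hcon
    push_neg at hcon
    have := hmin (c - 1) (by omega)
    omega


open Finset

section
variable {α : Type*}

lemma second_moment_le (A : Finset α) (v : α → ℤ) (c : ℤ)
    (ht : ∀ k : ℕ, 1 ≤ k → (A.filter fun f => c + k ≤ v f).card * 4 ^ k ≤ 2 * A.card)
    (hs : ∀ k : ℕ, 1 ≤ k → (A.filter fun f => v f ≤ c - k).card * 4 ^ k ≤ 2 * A.card)
    (hser : ∀ K : ℕ, ∑ k ∈ Finset.Icc 1 K, (k : ℝ)^2 / 4^k ≤ 1) :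
    ∑ f ∈ A, ((v f : ℝ) - c)^2 ≤ 4 * A.card := by
  classical
  set n := A.card with hndef
  set d : α → ℕ := fun f => (v f - c).natAbs with hddef
  set K := A.sup d with hKdef
  have hmaps : ∀ f ∈ A, d f ∈ Finset.range (K+1) := by
    intro f hf
    simp only [Finset.mem_range]
    exact Nat.lt_succ_of_le (Finset.le_sup hf)
  have hfib := Finset.sum_fiberwise_of_maps_to hmaps (fun f => ((v f : ℝ) - c)^2)
  rw [← hfib]
  have hinner : ∀ j ∈ Finset.range (K+1),
      ∑ f ∈ A.filter (fun f => d f = j), ((v f : ℝ) - c)^2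
        = (A.filter (fun f => d f = j)).card * (j:ℝ)^2 := by
    intro j _
    rw [Finset.sum_congr rfl (g := fun _ => (j:ℝ)^2), Finset.sum_const, nsmul_eq_mul]
    intro f hf
    simp only [Finset.mem_filter, hddef] at hf
    have habs : ((v f - c).natAbs : ℝ) = |((v f - c : ℤ) : ℝ)| := by
      rw [Nat.cast_natAbs]; push_cast; ring
    have h1 : ((v f : ℝ) - c) = ((v f - c : ℤ) : ℝ) := by push_cast; ring
    rw [h1, ← sq_abs, ← habs, hf.2]
  rw [Finset.sum_congr rfl hinner]
  have hsplit : Finset.range (K+1) = insert 0 (Finset.Icc 1 K) := by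
    ext x
    simp only [Finset.mem_range, Finset.mem_insert, Finset.mem_Icc]
    omega
  rw [hsplit, Finset.sum_insert (by simp)]
  simp only [Nat.cast_zero, ne_eq, OfNat.ofNat_ne_zero, not_false_eq_true, zero_pow, mul_zero,
    zero_add]
  have hterm : ∀ j ∈ Finset.Icc 1 K,
      ((A.filter (fun f => d f = j)).card : ℝ) * (j:ℝ)^2 ≤ 4*n * ((j:ℝ)^2/4^j) := by
    intro j hj
    simp only [Finset.mem_Icc] at hj
    have hsub : A.filter (fun f => d f = j)
        ⊆ (A.filter fun f => c + j ≤ v f) ∪ (A.filter fun f => v f ≤ c - j) := by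
      intro f hf
      simp only [Finset.mem_filter, hddef] at hf
      have := Int.natAbs_eq (v f - c)
      rw [hf.2] at this
      simp only [Finset.mem_union, Finset.mem_filter]
      rcases this with h | h
      · left; exact ⟨hf.1, by omega⟩
      · right; exact ⟨hf.1, by omega⟩
    have hcard : (A.filter (fun f => d f = j)).card
        ≤ (A.filter fun f => c + j ≤ v f).card + (A.filter fun f => v f ≤ c - j).card :=
      le_trans (Finset.card_le_card hsub) (Finset.card_union_le _ _)
    have h4pos : (0:ℝ) < 4^j := by positivity
    have ht' : ((A.filter fun f => c + j ≤ v f).card : ℝ) ≤ 2*n/4^j := by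
      rw [le_div_iff₀ h4pos]
      exact_mod_cast ht j hj.1
    have hs' : ((A.filter fun f => v f ≤ c - j).card : ℝ) ≤ 2*n/4^j := by
      rw [le_div_iff₀ h4pos]
      exact_mod_cast hs j hj.1
    have hm : ((A.filter (fun f => d f = j)).card : ℝ) ≤ 4*n/4^j := by
      calc ((A.filter (fun f => d f = j)).card : ℝ)
          ≤ ((A.filter fun f => c + j ≤ v f).card : ℝ)
            + ((A.filter fun f => v f ≤ c - j).card : ℝ) := by exact_mod_cast hcard
        _ ≤ 2*n/4^j + 2*n/4^j := add_le_add ht' hs'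
        _ = 4*n/4^j := by ring
    calc ((A.filter (fun f => d f = j)).card : ℝ) * (j:ℝ)^2
        ≤ (4*n/4^j) * (j:ℝ)^2 := by
          apply mul_le_mul_of_nonneg_right hm (by positivity)
      _ = 4*n * ((j:ℝ)^2/4^j) := by ring
  calc ∑ j ∈ Finset.Icc 1 K, ((A.filter (fun f => d f = j)).card : ℝ) * (j:ℝ)^2
      ≤ ∑ j ∈ Finset.Icc 1 K, 4*n * ((j:ℝ)^2/4^j) := Finset.sum_le_sum hterm
    _ = 4*n * ∑ j ∈ Finset.Icc 1 K, ((j:ℝ)^2/4^j) := by rw [Finset.mul_sum]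
    _ ≤ 4*n * 1 := by
        apply mul_le_mul_of_nonneg_left (hser K) (by positivity)
    _ = 4*n := by ring

end

open Finset
section
variable {α : Type*}


lemma series_le_one (K : ℕ) : ∑ k ∈ Finset.Icc 1 K, (k : ℝ)^2 / 4^k ≤ 1 := by
  have := series_aux K
  have hg : (0:ℝ) ≤ ((K:ℝ)^2 + 2*K + 2)/(2*4^K) := by positivity
  linarith

lemma exists_good (A : Finset α) (v : α → ℤ) (hn : 2 ≤ A.card)
    (hc : ∀ c : ℤ, 4 * (A.card : ℝ) < ∑ f ∈ A, ((v f : ℝ) - c)^2) :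
    ∃ h : ℤ, 1 ≤ (A.filter fun f => v f < h).card ∧
      1 ≤ (A.filter fun f => h < v f).card ∧
      (A.filter fun f => v f = h).card ^ 2
        ≤ 4 * (A.filter fun f => v f < h).card * (A.filter fun f => h < v f).card := by
  by_contra hcon
  push_neg at hcon
  have hbad : ∀ h : ℤ, 1 ≤ (A.filter fun f => v f < h).card →
      1 ≤ (A.filter fun f => h < v f).card →
      4 * (A.filter fun f => v f < h).card * (A.filter fun f => h < v f).card
        < (A.filter fun f => v f = h).card ^ 2 := fun h h1 h2 => hcon h h1 h2
  have hA : A.Nonempty := Finset.card_pos.mp (by omega)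
  obtain ⟨c, hmed1, hmed2⟩ := exists_median A v hA
  -- right tail
  have ht := tail_bound A v c hn hbad hmed1
  -- left tail via negation
  have hbadneg : ∀ h : ℤ, 1 ≤ (A.filter fun f => (-v) f < h).card →
      1 ≤ (A.filter fun f => h < (-v) f).card →
      4 * (A.filter fun f => (-v) f < h).card * (A.filter fun f => h < (-v) f).card
        < (A.filter fun f => (-v) f = h).card ^ 2 := by
    intro h h1 h2
    have e1 : A.filter (fun f => (-v) f < h) = A.filter (fun f => -h < v f) :=
      Finset.filter_congr (fun f _ => by simp only [Pi.neg_apply]; omega)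
    have e2 : A.filter (fun f => h < (-v) f) = A.filter (fun f => v f < -h) :=
      Finset.filter_congr (fun f _ => by simp only [Pi.neg_apply]; omega)
    have e3 : A.filter (fun f => (-v) f = h) = A.filter (fun f => v f = -h) :=
      Finset.filter_congr (fun f _ => by simp only [Pi.neg_apply]; omega)
    rw [e1] at h1
    rw [e2] at h2
    rw [e1, e2, e3]
    have := hbad (-h) h2 h1
    calc 4 * (A.filter fun f => -h < v f).card * (A.filter fun f => v f < -h).card
        = 4 * (A.filter fun f => v f < -h).card * (A.filter fun f => -h < v f).card := by ring
      _ < _ := this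
  have hmed1' : 2 * (A.filter fun f => (-c) + 1 ≤ (-v) f).card ≤ A.card := by
    have e : A.filter (fun f => (-c) + 1 ≤ (-v) f) = A.filter (fun f => v f ≤ c - 1) :=
      Finset.filter_congr (fun f _ => by simp only [Pi.neg_apply]; omega)
    rw [e]; exact hmed2
  have hsaux := tail_bound A (-v) (-c) hn hbadneg hmed1'
  have hs : ∀ k : ℕ, 1 ≤ k → (A.filter fun f => v f ≤ c - k).card * 4 ^ k ≤ 2 * A.card := by
    intro k hk
    have e : A.filter (fun f => (-c) + (k:ℤ) ≤ (-v) f) = A.filter (fun f => v f ≤ c - k) :=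
      Finset.filter_congr (fun f _ => by simp only [Pi.neg_apply]; omega)
    have := hsaux k hk
    rwa [e] at this
  have := second_moment_le A v c ht hs series_le_one
  have := hc c
  linarith
end

lemma shatteredCenters_mono {A B : Finset (Ω → ℤ)} (hBA : B ⊆ A) :
    shatteredCenters B ⊆ shatteredCenters A := by
  rintro ⟨σ, h⟩ ⟨hsupp, hne, hsh⟩
  refine ⟨hsupp, hne.mono hBA, fun θ => ?_⟩
  obtain ⟨f, hf, hfp⟩ := hsh θ
  exact ⟨f, hBA hf, hfp⟩

lemma step_lemma (A : Finset (Ω → ℤ)) (ω₀ : Ω) (h₀ : ℤ)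
    (Sp Sm : Finset (Finset Ω × (Ω → ℤ)))
    (hSp : ↑Sp ⊆ shatteredCenters (A.filter fun f => h₀ < f ω₀))
    (hSm : ↑Sm ⊆ shatteredCenters (A.filter fun f => f ω₀ < h₀)) :
    ∃ S : Finset (Finset Ω × (Ω → ℤ)), ↑S ⊆ shatteredCenters A ∧
      S.card = Sp.card + Sm.card := by
  classical
  set Bp := A.filter fun f => h₀ < f ω₀ with hBp
  set Bm := A.filter fun f => f ω₀ < h₀ with hBm
  set φ : (Finset Ω × (Ω → ℤ)) → (Finset Ω × (Ω → ℤ)) :=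
    fun p => (insert ω₀ p.1, Function.update p.2 ω₀ h₀) with hφ
  -- centers shattered by both don't contain ω₀
  have hnotmem : ∀ p ∈ Sp ∩ Sm, ω₀ ∉ p.1 := by
    intro p hp hmem
    obtain ⟨hsupp, _, hshp⟩ := hSp (Finset.mem_coe.mpr (Finset.mem_of_mem_inter_left hp))
    obtain ⟨_, _, hshm⟩ := hSm (Finset.mem_coe.mpr (Finset.mem_of_mem_inter_right hp))
    obtain ⟨f, hf, hfp⟩ := hshp (fun _ => false)
    obtain ⟨g, hg, hgp⟩ := hshm (fun _ => true)
    have h1 : f ω₀ < p.2 ω₀ := (hfp ω₀ hmem).2 rfl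
    have h2 : h₀ < f ω₀ := (Finset.mem_filter.mp hf).2
    have h3 : p.2 ω₀ < g ω₀ := (hgp ω₀ hmem).1 rfl
    have h4 : g ω₀ < h₀ := (Finset.mem_filter.mp hg).2
    omega
  -- φ maps common centers to shattered centers of A
  have hφmem : ∀ p ∈ Sp ∩ Sm, φ p ∈ shatteredCenters A := by
    intro p hp
    have hnm := hnotmem p hp
    obtain ⟨hsuppp, hnep, hshp⟩ := hSp (Finset.mem_coe.mpr (Finset.mem_of_mem_inter_left hp))
    obtain ⟨hsuppm, hnem, hshm⟩ := hSm (Finset.mem_coe.mpr (Finset.mem_of_mem_inter_right hp))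
    refine ⟨?_, hnep.mono (Finset.filter_subset _ _), ?_⟩
    · intro i hi
      simp only [hφ, Finset.mem_insert, not_or] at hi
      simp only [hφ]
      rw [Function.update_of_ne hi.1]
      exact hsuppp i hi.2
    · intro θ
      cases hθ : θ ω₀ with
      | true =>
          obtain ⟨f, hf, hfp⟩ := hshp θ
          refine ⟨f, Finset.mem_of_mem_filter f hf, ?_⟩
          intro i hi
          rcases Finset.mem_insert.mp hi with rfl | hiσ
          · constructor
            · intro _
              simp only [hφ, Function.update_self]
              exact (Finset.mem_filter.mp hf).2
            · intro hfalse; rw [hθ] at hfalse; exact absurd hfalse (by simp)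
          · have hne : i ≠ ω₀ := fun he => hnm (he ▸ hiσ)
            simp only [hφ]
            rw [Function.update_of_ne hne]
            exact hfp i hiσ
      | false =>
          obtain ⟨f, hf, hfp⟩ := hshm θ
          refine ⟨f, Finset.mem_of_mem_filter f hf, ?_⟩
          intro i hi
          rcases Finset.mem_insert.mp hi with rfl | hiσ
          · constructor
            · intro htrue; rw [hθ] at htrue; exact absurd htrue (by simp)
            · intro _
              simp only [hφ, Function.update_self]
              exact (Finset.mem_filter.mp hf).2
          · have hne : i ≠ ω₀ := fun he => hnm (he ▸ hiσ)
            simp only [hφ]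
            rw [Function.update_of_ne hne]
            exact hfp i hiσ
  -- disjointness of the image from Sp ∪ Sm
  have hdisj : Disjoint (Sp ∪ Sm) ((Sp ∩ Sm).image φ) := by
    rw [Finset.disjoint_right]
    intro q hq hq'
    obtain ⟨p, hp, rfl⟩ := Finset.mem_image.mp hq
    have hmem : ω₀ ∈ (φ p).1 := Finset.mem_insert_self _ _
    have hval : (φ p).2 ω₀ = h₀ := by simp [hφ]
    rcases Finset.mem_union.mp hq' with hqp | hqm
    · obtain ⟨_, _, hsh⟩ := hSp (Finset.mem_coe.mpr hqp)
      obtain ⟨f, hf, hfp⟩ := hsh (fun _ => false)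
      have h1 : f ω₀ < (φ p).2 ω₀ := (hfp ω₀ hmem).2 rfl
      have h2 : h₀ < f ω₀ := (Finset.mem_filter.mp hf).2
      omega
    · obtain ⟨_, _, hsh⟩ := hSm (Finset.mem_coe.mpr hqm)
      obtain ⟨f, hf, hfp⟩ := hsh (fun _ => true)
      have h1 : (φ p).2 ω₀ < f ω₀ := (hfp ω₀ hmem).1 rfl
      have h2 : f ω₀ < h₀ := (Finset.mem_filter.mp hf).2
      omega
  -- injectivity of φ on Sp ∩ Sm
  have hinj : Set.InjOn φ ↑(Sp ∩ Sm) := by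
    intro p hp q hq he
    have hnp := hnotmem p (Finset.mem_coe.mp hp)
    have hnq := hnotmem q (Finset.mem_coe.mp hq)
    have hsp : p.2 ω₀ = 0 :=
      (hSp (Finset.mem_coe.mpr (Finset.mem_of_mem_inter_left (Finset.mem_coe.mp hp)))).1 ω₀ hnp
    have hsq : q.2 ω₀ = 0 :=
      (hSp (Finset.mem_coe.mpr (Finset.mem_of_mem_inter_left (Finset.mem_coe.mp hq)))).1 ω₀ hnq
    have h1 : insert ω₀ p.1 = insert ω₀ q.1 := congrArg Prod.fst he
    have h2 : Function.update p.2 ω₀ h₀ = Function.update q.2 ω₀ h₀ := congrArg Prod.snd he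
    have hfst : p.1 = q.1 := by
      have := congrArg (fun s => Finset.erase s ω₀) h1
      simpa [Finset.erase_insert hnp, Finset.erase_insert hnq] using this
    have hsnd : p.2 = q.2 := by
      funext i
      by_cases hi : i = ω₀
      · rw [hi, hsp, hsq]
      · have := congrFun h2 i
        rwa [Function.update_of_ne hi, Function.update_of_ne hi] at this
    exact Prod.ext hfst hsnd
  refine ⟨(Sp ∪ Sm) ∪ (Sp ∩ Sm).image φ, ?_, ?_⟩
  · intro q hq
    rcases Finset.mem_union.mp hq with hq' | hq'
    · rcases Finset.mem_union.mp hq' with h | h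
      · exact shatteredCenters_mono (Finset.filter_subset _ _) (hSp (Finset.mem_coe.mpr h))
      · exact shatteredCenters_mono (Finset.filter_subset _ _) (hSm (Finset.mem_coe.mpr h))
    · obtain ⟨p, hp, rfl⟩ := Finset.mem_image.mp hq'
      exact hφmem p hp
  · rw [Finset.card_union_of_disjoint hdisj, Finset.card_image_of_injOn hinj,
      Finset.card_union_add_card_inter]


open MeasureTheory Finset

variable {Ω : Type*}

lemma exists_point [MeasurableSpace Ω] (μ : Measure Ω) [IsProbabilityMeasure μ]
    (A : Finset (Ω → ℤ)) (hA : 2 ≤ A.card)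
    (hmem : ∀ f ∈ A, MemLp (fun ω => (f ω : ℝ)) 2 μ)
    (hsep : ∀ f ∈ A, ∀ g ∈ A, f ≠ g → ∫ ω, ((f ω : ℝ) - (g ω : ℝ)) ^ 2 ∂μ ≥ 36) :
    ∃ ω₀ : Ω, ((36 * A.card * (A.card - 1) : ℕ) : ℝ)
      ≤ ∑ f ∈ A, ∑ g ∈ A, ((f ω₀ : ℝ) - (g ω₀ : ℝ))^2 := by
  classical
  set n := A.card with hn
  set C : ℕ := 36 * n * (n - 1) with hC
  have hint : ∀ f ∈ A, ∀ g ∈ A, Integrable (fun ω => ((f ω : ℝ) - (g ω : ℝ))^2) μ := by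
    intro f hf g hg
    have := ((hmem f hf).sub (hmem g hg)).integrable_sq
    simpa [Pi.sub_apply] using this
  have hGint : Integrable (fun ω => ∑ f ∈ A, ∑ g ∈ A, ((f ω : ℝ) - (g ω : ℝ))^2) μ := by
    apply integrable_finset_sum
    intro f hf
    exact integrable_finset_sum _ (fun g hg => hint f hf g hg)
  have hIG : (C : ℝ) ≤ ∫ ω, (∑ f ∈ A, ∑ g ∈ A, ((f ω : ℝ) - (g ω : ℝ))^2) ∂μ := by
    rw [integral_finset_sum A (fun f hf => integrable_finset_sum _ (fun g hg => hint f hf g hg))]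
    have hswap : ∀ f ∈ A, ∫ ω, (∑ g ∈ A, ((f ω : ℝ) - (g ω : ℝ))^2) ∂μ
        = ∑ g ∈ A, ∫ ω, ((f ω : ℝ) - (g ω : ℝ))^2 ∂μ :=
      fun f hf => integral_finset_sum A (fun g hg => hint f hf g hg)
    rw [Finset.sum_congr rfl hswap]
    have hrow : ∀ f ∈ A, ((n - 1 : ℕ) : ℝ) * 36
        ≤ ∑ g ∈ A, ∫ ω, ((f ω : ℝ) - (g ω : ℝ))^2 ∂μ := by
      intro f hf
      have hsum := Finset.sum_erase_add A
        (fun g => ∫ ω, ((f ω : ℝ) - (g ω : ℝ))^2 ∂μ) hf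
      have hff : (∫ ω, ((f ω : ℝ) - (f ω : ℝ))^2 ∂μ) = 0 := by simp
      have hge : ((A.erase f).card) • (36:ℝ)
          ≤ ∑ g ∈ A.erase f, ∫ ω, ((f ω : ℝ) - (g ω : ℝ))^2 ∂μ := by
        apply Finset.card_nsmul_le_sum
        intro g hg
        exact hsep f hf g (Finset.mem_of_mem_erase hg)
          (fun he => (Finset.ne_of_mem_erase hg) he.symm)
      rw [Finset.card_erase_of_mem hf, nsmul_eq_mul] at hge
      calc ((n - 1 : ℕ) : ℝ) * 36
          ≤ ∑ g ∈ A.erase f, ∫ ω, ((f ω : ℝ) - (g ω : ℝ))^2 ∂μ := hge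
        _ = ∑ g ∈ A, ∫ ω, ((f ω : ℝ) - (g ω : ℝ))^2 ∂μ := by
            simpa [hff] using hsum
    calc (C : ℝ) = n * (((n - 1 : ℕ) : ℝ) * 36) := by
          rw [hC]
          push_cast
          ring
      _ = ∑ _f ∈ A, ((n - 1 : ℕ) : ℝ) * 36 := by
          rw [Finset.sum_const, nsmul_eq_mul, hn]
      _ ≤ _ := Finset.sum_le_sum hrow
  by_contra hcon
  push_neg at hcon
  have hpt : ∀ ω : Ω, (∑ f ∈ A, ∑ g ∈ A, ((f ω : ℝ) - (g ω : ℝ))^2) ≤ (C : ℝ) - 1 := by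
    intro ω
    have h1 : (∑ f ∈ A, ∑ g ∈ A, ((f ω : ℝ) - (g ω : ℝ))^2)
        = ((∑ f ∈ A, ∑ g ∈ A, (f ω - g ω)^2 : ℤ) : ℝ) := by
      push_cast
      rfl
    have h2 := hcon ω
    rw [h1] at h2 ⊢
    have h3 : (∑ f ∈ A, ∑ g ∈ A, (f ω - g ω)^2 : ℤ) < (C : ℤ) := by exact_mod_cast h2
    have h4 : (∑ f ∈ A, ∑ g ∈ A, (f ω - g ω)^2 : ℤ) ≤ (C : ℤ) - 1 := by
      have := Int.lt_iff_add_one_le.mp h3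
      linarith
    calc ((∑ f ∈ A, ∑ g ∈ A, (f ω - g ω)^2 : ℤ) : ℝ)
        ≤ (((C : ℤ) - 1 : ℤ) : ℝ) := by exact_mod_cast h4
      _ = (C : ℝ) - 1 := by push_cast; ring
  have hile : ∫ ω, (∑ f ∈ A, ∑ g ∈ A, ((f ω : ℝ) - (g ω : ℝ))^2) ∂μ ≤ (C:ℝ) - 1 := by
    calc ∫ ω, (∑ f ∈ A, ∑ g ∈ A, ((f ω : ℝ) - (g ω : ℝ))^2) ∂μ
        ≤ ∫ _ω, ((C:ℝ) - 1) ∂μ := integral_mono hGint (integrable_const _) hpt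
      _ = (C:ℝ) - 1 := by simp
  linarith

lemma key_induction [MeasurableSpace Ω] (μ : Measure Ω) [IsProbabilityMeasure μ] :
    ∀ (n : ℕ) (A : Finset (Ω → ℤ)), A.card ≤ n →
      (∀ f ∈ A, MemLp (fun ω => (f ω : ℝ)) 2 μ) →
      (∀ f ∈ A, ∀ g ∈ A, f ≠ g → ∫ ω, ((f ω : ℝ) - (g ω : ℝ)) ^ 2 ∂μ ≥ 36) →
      ∃ S : Finset (Finset Ω × (Ω → ℤ)), ↑S ⊆ shatteredCenters A ∧
        (A.card : ℝ) ≤ ((S.card : ℝ))^2 := by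
  intro n
  induction n with
  | zero =>
      intro A hcard _ _
      refine ⟨∅, by simp, ?_⟩
      interval_cases h : A.card <;> simp_all
  | succ n ih =>
      intro A hcard hmem hsep
      rcases le_or_gt A.card 1 with hle | hgt
      · rcases Nat.le_one_iff_eq_zero_or_eq_one.mp hle with h0 | h1
        · exact ⟨∅, by simp, by rw [h0]; norm_num⟩
        · refine ⟨{(∅, fun _ => 0)}, ?_, by rw [h1]; norm_num⟩
          intro p hp
          simp only [Finset.coe_singleton, Set.mem_singleton_iff] at hp
          subst hp
          have hA : A.Nonempty := Finset.card_pos.mp (by omega)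
          exact ⟨by simp, hA, fun θ => ⟨hA.choose, hA.choose_spec, by simp⟩⟩
      · -- main case
        have h2 : 2 ≤ A.card := hgt
        obtain ⟨ω₀, hω₀⟩ := exists_point μ A h2 hmem hsep
        set v : (Ω → ℤ) → ℤ := fun f => f ω₀ with hv
        -- spread bound
        have hc : ∀ c : ℤ, 4 * (A.card : ℝ) < ∑ f ∈ A, ((v f : ℝ) - c)^2 := by
          intro c
          have hpair : ∑ f ∈ A, ∑ g ∈ A, ((f ω₀ : ℝ) - (g ω₀ : ℝ))^2
              ≤ 4 * A.card * ∑ f ∈ A, ((v f : ℝ) - c)^2 := by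
            have hptwise : ∀ f ∈ A, ∑ g ∈ A, ((f ω₀ : ℝ) - (g ω₀ : ℝ))^2
                ≤ ∑ g ∈ A, (2*((v f : ℝ) - c)^2 + 2*((v g : ℝ) - c)^2) := by
              intro f _
              apply Finset.sum_le_sum
              intro g _
              have : ((f ω₀ : ℝ) - g ω₀) = ((v f : ℝ) - c) - ((v g : ℝ) - c) := by
                simp only [hv]; ring
              rw [this]
              nlinarith [sq_nonneg (((v f : ℝ) - c) + ((v g : ℝ) - c))]
            calc ∑ f ∈ A, ∑ g ∈ A, ((f ω₀ : ℝ) - (g ω₀ : ℝ))^2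
                ≤ ∑ f ∈ A, ∑ g ∈ A, (2*((v f : ℝ) - c)^2 + 2*((v g : ℝ) - c)^2) :=
                  Finset.sum_le_sum hptwise
              _ = 4 * A.card * ∑ f ∈ A, ((v f : ℝ) - c)^2 := by
                  simp only [Finset.sum_add_distrib, Finset.sum_const, nsmul_eq_mul,
                    ← Finset.mul_sum, ← Finset.sum_mul]
                  ring
          have hCval : ((36 * A.card * (A.card - 1) : ℕ) : ℝ)
              = 36 * (A.card : ℝ) * ((A.card : ℝ) - 1) := by
            have h1 : (1:ℕ) ≤ A.card := by omega
            push_cast [Nat.cast_sub h1]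
            ring
          rw [hCval] at hω₀
          have hn2 : (2:ℝ) ≤ (A.card : ℝ) := by exact_mod_cast h2
          have hsum_nonneg : (0:ℝ) ≤ ∑ f ∈ A, ((v f : ℝ) - c)^2 :=
            Finset.sum_nonneg (fun f _ => sq_nonneg _)
          nlinarith [hω₀, hpair]
        obtain ⟨h₀, ha1, hb1, hgood⟩ := exists_good A v h2 hc
        set a := (A.filter fun f => v f < h₀).card with hadef
        set b := (A.filter fun f => h₀ < v f).card with hbdef
        set l := (A.filter fun f => v f = h₀).card with hldef
        -- partition
        have hpart : a + (l + b) = A.card := by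
          rw [hadef]
          have step1 : (A.filter fun f => v f = h₀).card + (A.filter fun f => h₀ < v f).card
              = (A.filter fun f => h₀ ≤ v f).card := by
            have e1 : A.filter (fun f => v f = h₀)
                = (A.filter fun f => h₀ ≤ v f).filter (fun f => v f = h₀) := by
              rw [Finset.filter_filter]
              exact Finset.filter_congr (fun f _ => by constructor <;> intro hh <;>
                [exact ⟨le_of_eq hh.symm, hh⟩; exact hh.2])
            have e2 : A.filter (fun f => h₀ < v f)
                = (A.filter fun f => h₀ ≤ v f).filter (fun f => ¬ (v f = h₀)) := by
              rw [Finset.filter_filter]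
              exact Finset.filter_congr (fun f _ => by constructor <;> intro hh <;>
                [exact ⟨le_of_lt hh, by omega⟩; omega])
            rw [e1, e2]
            exact Finset.card_filter_add_card_filter_not _
          rw [hldef, hbdef, step1]
          exact filter_neg_card_split A _ _ (fun f _ => by constructor <;> intro <;> omega)
        -- recursive calls
        have hmemm : ∀ f ∈ A.filter (fun f => v f < h₀), MemLp (fun ω => (f ω : ℝ)) 2 μ :=
          fun f hf => hmem f (Finset.mem_of_mem_filter f hf)
        have hsepm : ∀ f ∈ A.filter (fun f => v f < h₀), ∀ g ∈ A.filter (fun f => v f < h₀),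
            f ≠ g → ∫ ω, ((f ω : ℝ) - (g ω : ℝ)) ^ 2 ∂μ ≥ 36 :=
          fun f hf g hg hne => hsep f (Finset.mem_of_mem_filter f hf)
            g (Finset.mem_of_mem_filter g hg) hne
        have hmemp : ∀ f ∈ A.filter (fun f => h₀ < v f), MemLp (fun ω => (f ω : ℝ)) 2 μ :=
          fun f hf => hmem f (Finset.mem_of_mem_filter f hf)
        have hsepp : ∀ f ∈ A.filter (fun f => h₀ < v f), ∀ g ∈ A.filter (fun f => h₀ < v f),
            f ≠ g → ∫ ω, ((f ω : ℝ) - (g ω : ℝ)) ^ 2 ∂μ ≥ 36 :=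
          fun f hf g hg hne => hsep f (Finset.mem_of_mem_filter f hf)
            g (Finset.mem_of_mem_filter g hg) hne
        have hma : (A.filter (fun f => v f < h₀)).card ≤ n := by
          rw [← hadef]; omega
        have hmb : (A.filter (fun f => h₀ < v f)).card ≤ n := by
          rw [← hbdef]; omega
        obtain ⟨Sm, hSm, hSmcard⟩ := ih (A.filter (fun f => v f < h₀)) hma hmemm hsepm
        obtain ⟨Sp, hSp, hSpcard⟩ := ih (A.filter (fun f => h₀ < v f)) hmb hmemp hsepp
        -- combine: filters in step_lemma are about f ω₀, same as v f
        have hSp' : ↑Sp ⊆ shatteredCenters (A.filter fun f => h₀ < f ω₀) := hSp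
        have hSm' : ↑Sm ⊆ shatteredCenters (A.filter fun f => f ω₀ < h₀) := hSm
        obtain ⟨S, hS, hScard⟩ := step_lemma A ω₀ h₀ Sp Sm hSp' hSm'
        refine ⟨S, hS, ?_⟩
        rw [hScard]
        rw [← hadef] at hSmcard
        rw [← hbdef] at hSpcard
        -- numeric conclusion
        have hxm : (0:ℝ) ≤ (Sm.card : ℝ) := Nat.cast_nonneg _
        have hxp : (0:ℝ) ≤ (Sp.card : ℝ) := Nat.cast_nonneg _
        have hgoodR : ((l:ℝ))^2 ≤ 4 * a * b := by exact_mod_cast hgood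
        have hpartR : (a:ℝ) + ((l:ℝ) + (b:ℝ)) = (A.card : ℝ) := by exact_mod_cast hpart
        have hlR : (l:ℝ) ≤ 2 * (Sm.card : ℝ) * (Sp.card : ℝ) := by
          nlinarith [sq_nonneg ((l:ℝ) - 2 * (Sm.card : ℝ) * (Sp.card : ℝ)),
            sq_nonneg ((l:ℝ) + 2 * (Sm.card : ℝ) * (Sp.card : ℝ)),
            Nat.cast_nonneg (α := ℝ) l, mul_nonneg hxm hxp,
            mul_le_mul hSmcard hSpcard (Nat.cast_nonneg _) (sq_nonneg _)]
        push_cast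
        nlinarith [hSmcard, hSpcard, hlR, hpartR]


end Aux

theorem stmt_9 [MeasurableSpace Ω] (μ : Measure Ω) [IsProbabilityMeasure μ]
    (A : Finset (Ω → ℤ)) (hA : 2 ≤ A.card)
    (hmem : ∀ f ∈ A, MemLp (fun ω => (f ω : ℝ)) 2 μ)
    (hsep : ∀ f ∈ A, ∀ g ∈ A, f ≠ g → ∫ ω, ((f ω : ℝ) - (g ω : ℝ)) ^ 2 ∂μ ≥ 36) :
    (⌈Real.sqrt A.card⌉₊ : ℕ∞) ≤ (shatteredCenters A).encard := by
  obtain ⟨S, hsub, hle⟩ := key_induction μ A.card A le_rfl hmem hsep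
  have hS : Real.sqrt A.card ≤ S.card := by
    calc Real.sqrt A.card ≤ Real.sqrt (((S.card : ℝ))^2) := Real.sqrt_le_sqrt hle
      _ = (S.card : ℝ) := Real.sqrt_sq (Nat.cast_nonneg _)
  have hceil : ⌈Real.sqrt A.card⌉₊ ≤ S.card := Nat.ceil_le.mpr hS
  calc (⌈Real.sqrt A.card⌉₊ : ℕ∞) ≤ (S.card : ℕ∞) := by exact_mod_cast hceil
    _ = (↑S : Set (Finset Ω × (Ω → ℤ))).encard := (Set.encard_coe_eq_coe_finsetCard S).symm
    _ ≤ (shatteredCenters A).encard := Set.encard_mono hsub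
end

section
/- Let Ω be a finite set of cardinality n and A a class of functions from Ω to {0, 1, ..., p}. If d is the maximal dimension of a center shattered by A, then the total number of centers shattered by A is at most Σ_{k=0}^d C(n,k) p^k. -/
variable {Ω : Type*}

theorem stmt_11 [Fintype Ω] (n : ℕ) (hn : Fintype.card Ω = n)
    (p : ℕ) (A : Finset (Ω → ℤ))
    (hrange : ∀ f ∈ A, ∀ i : Ω, 0 ≤ f i ∧ f i ≤ (p : ℤ))
    (d : ℕ)
    (hd_max : ∀ q ∈ shatteredCenters A, q.1.card ≤ d)
    (hd_ex : ∃ q ∈ shatteredCenters A, q.1.card = d) :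
    (shatteredCenters A).encard ≤ (∑ k ∈ Finset.range (d + 1), n.choose k * p ^ k : ℕ) := by
  classical
  set piF : Finset Ω → Finset (Ω → ℤ) :=
    fun σ => Fintype.piFinset (fun i => if i ∈ σ then Finset.Ioo (0:ℤ) (p:ℤ) else {(0:ℤ)})
    with hpiF
  set T : Finset (Finset Ω × (Ω → ℤ)) :=
    (Finset.range (d+1)).biUnion (fun k =>
      (Finset.powersetCard k (Finset.univ : Finset Ω)).biUnion (fun σ => {σ} ×ˢ piF σ))
    with hT
  have hsub : shatteredCenters A ⊆ ↑T := by
    rintro ⟨σ, h⟩ hq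
    have hq' := hq
    obtain ⟨hsupp, hA, hsh⟩ := hq'
    dsimp only at hsupp hsh
    simp only [hT, Finset.coe_biUnion, Set.mem_iUnion, Finset.mem_coe,
      Finset.mem_biUnion, Finset.mem_range, Finset.mem_powersetCard]
    refine ⟨σ.card, Nat.lt_succ_of_le (hd_max _ hq), σ,
      ⟨Finset.subset_univ _, rfl⟩, ?_⟩
    rw [Finset.mem_product]
    refine ⟨Finset.mem_singleton_self _, ?_⟩
    rw [Fintype.mem_piFinset]
    intro i
    by_cases hi : i ∈ σ
    · simp only [hi, if_true, Finset.mem_Ioo]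
      constructor
      · obtain ⟨f, hf, hff⟩ := hsh (fun _ => false)
        have := (hff i hi).2 rfl
        have := (hrange f hf i).1
        omega
      · obtain ⟨f, hf, hff⟩ := hsh (fun _ => true)
        have := (hff i hi).1 rfl
        have := (hrange f hf i).2
        omega
    · simp [hi, hsupp i hi]
  have hTcard : T.card ≤ ∑ k ∈ Finset.range (d + 1), n.choose k * p ^ k := by
    calc T.card ≤ ∑ k ∈ Finset.range (d+1),
        ((Finset.powersetCard k (Finset.univ : Finset Ω)).biUnion
          (fun σ => {σ} ×ˢ piF σ)).card := Finset.card_biUnion_le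
    _ ≤ ∑ k ∈ Finset.range (d+1), n.choose k * p ^ k := by
        refine Finset.sum_le_sum fun k _ => ?_
        calc ((Finset.powersetCard k (Finset.univ : Finset Ω)).biUnion
              (fun σ => {σ} ×ˢ piF σ)).card
            ≤ ∑ σ ∈ Finset.powersetCard k (Finset.univ : Finset Ω),
              ({σ} ×ˢ piF σ).card := Finset.card_biUnion_le
          _ ≤ ∑ σ ∈ Finset.powersetCard k (Finset.univ : Finset Ω), p ^ k := by
              refine Finset.sum_le_sum fun σ hσ => ?_
              rw [Finset.mem_powersetCard] at hσ
              rw [Finset.card_product, Finset.card_singleton, one_mul, hpiF,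
                Fintype.card_piFinset]
              calc ∏ i : Ω, (if i ∈ σ then Finset.Ioo (0:ℤ) (p:ℤ) else {(0:ℤ)}).card
                  ≤ ∏ i : Ω, (if i ∈ σ then p else 1) := by
                    refine Finset.prod_le_prod (fun _ _ => Nat.zero_le _) fun i _ => ?_
                    by_cases hi : i ∈ σ <;> simp [hi, Int.card_Ioo]
                _ = p ^ k := by
                    rw [Finset.prod_ite_mem, Finset.univ_inter, Finset.prod_const, hσ.2]
          _ = n.choose k * p ^ k := by
              rw [Finset.sum_const, Finset.card_powersetCard, Finset.card_univ, hn,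
                smul_eq_mul]
  calc (shatteredCenters A).encard ≤ (↑T : Set _).encard := Set.encard_mono hsub
    _ = T.card := Set.encard_coe_eq_coe_finsetCard T
    _ ≤ _ := by exact_mod_cast hTcard
end

section
/- There exists an absolute constant c > 0 such that the following holds. Let Ω be a finite set with uniform probability measure μ, and A a class of functions on Ω bounded by 1 which is t-separated in L_2(μ) for some 0 < t < 1. If |A| ≤ (1/2) exp(c t^4 k) for some k > 0, then there exists σ ⊆ Ω with |σ| ≤ k such that A is (t/2)-separated in L_2(μ_σ), where μ_σ is the uniform probability measure on σ. -/
open Finset Real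

lemma sum_pi_bool {Ω : Type} [Fintype Ω] [DecidableEq Ω] (φ : Ω → Bool → ℝ) :
    ∑ b : Ω → Bool, ∏ i, φ i (b i) = ∏ i, (φ i true + φ i false) := by
  rw [show (∏ i, (φ i true + φ i false)) = ∏ i, ∑ v : Bool, φ i v by simp,
    Fintype.prod_sum]

lemma markov_fin {γ : Type} [Fintype γ] (W X : γ → ℝ) (hW : ∀ b, 0 ≤ W b)
    (hX : ∀ b, 0 ≤ X b) (B : Finset γ) (a : ℝ) (hB : ∀ b ∈ B, a ≤ X b) :
    a * ∑ b ∈ B, W b ≤ ∑ b : γ, W b * X b := by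
  calc a * ∑ b ∈ B, W b = ∑ b ∈ B, W b * a := by rw [Finset.mul_sum]; exact Finset.sum_congr rfl fun b _ => mul_comm a (W b)
  _ ≤ ∑ b ∈ B, W b * X b :=
    Finset.sum_le_sum fun b hb => mul_le_mul_of_nonneg_left (hB b hb) (hW b)
  _ ≤ ∑ b : γ, W b * X b :=
    Finset.sum_le_sum_of_subset_of_nonneg (Finset.subset_univ B)
      (fun b _ _ => mul_nonneg (hW b) (hX b))

lemma exp_neg_le_quad {x : ℝ} (hx : 0 ≤ x) : Real.exp (-x) ≤ 1 - x + x ^ 2 := by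
  have h1 : x + 1 ≤ Real.exp x := Real.add_one_le_exp x
  have h2 : 0 < Real.exp (-x) := Real.exp_pos _
  have h3 : Real.exp (-x) * Real.exp x = 1 := by
    rw [← Real.exp_add]; simp
  nlinarith [sq_nonneg x, mul_pos h2 (Real.exp_pos x)]

lemma chernoff_core {Ω : Type} [Fintype Ω] [DecidableEq Ω] {p : ℝ}
    (hp0 : 0 ≤ p) (hp1 : p ≤ 1) (ψ : Ω → ℝ) (hψ : ∀ i, 0 ≤ ψ i)
    {a : ℝ} (ha : 0 < a) (B : Finset (Ω → Bool))
    (hB : ∀ b ∈ B, a ≤ ∏ i, (if b i then ψ i else 1)) :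
    ∑ b ∈ B, (∏ i, if b i then p else 1 - p) ≤
      a⁻¹ * Real.exp (p * ∑ i, (ψ i - 1)) := by
  have hWnn : ∀ b : Ω → Bool, 0 ≤ ∏ i, (if b i then p else 1 - p) :=
    fun b => Finset.prod_nonneg fun i _ => by
      split <;> linarith
  have hXnn : ∀ b : Ω → Bool, 0 ≤ ∏ i, (if b i then ψ i else 1) :=
    fun b => Finset.prod_nonneg fun i _ => by
      split
      · exact hψ i
      · norm_num
  have key := markov_fin (fun b : Ω → Bool => ∏ i, (if b i then p else 1 - p))
    (fun b => ∏ i, (if b i then ψ i else 1)) hWnn hXnn B a hB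
  have hE : ∑ b : Ω → Bool, (∏ i, (if b i then p else 1 - p)) *
      (∏ i, (if b i then ψ i else 1)) = ∏ i, (p * ψ i + (1 - p)) := by
    have : ∀ b : Ω → Bool, (∏ i, (if b i then p else 1 - p)) *
        (∏ i, (if b i then ψ i else 1)) =
        ∏ i, (if b i then p * ψ i else 1 - p) := by
      intro b
      rw [← Finset.prod_mul_distrib]
      exact Finset.prod_congr rfl fun i _ => by split <;> ring
    rw [Finset.sum_congr rfl fun b _ => this b,
      sum_pi_bool (fun i v => if v then p * ψ i else 1 - p)]
    simp
  rw [hE] at key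
  have hprod : ∏ i, (p * ψ i + (1 - p)) ≤ Real.exp (p * ∑ i, (ψ i - 1)) := by
    rw [Finset.mul_sum, Real.exp_sum]
    refine Finset.prod_le_prod (fun i _ => by nlinarith [hψ i]) fun i _ => ?_
    have := Real.add_one_le_exp (p * (ψ i - 1))
    linarith
  have h1 : ∑ b ∈ B, (∏ i, if b i then p else 1 - p) ≤
      a⁻¹ * ∏ i, (p * ψ i + (1 - p)) := by
    have h2 : (0:ℝ) < a⁻¹ := by positivity
    calc ∑ b ∈ B, (∏ i, if b i then p else 1 - p)
        = a⁻¹ * (a * ∑ b ∈ B, (∏ i, if b i then p else 1 - p)) := by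
          field_simp
      _ ≤ a⁻¹ * ∏ i, (p * ψ i + (1 - p)) :=
          mul_le_mul_of_nonneg_left key h2.le
  refine h1.trans ?_
  exact mul_le_mul_of_nonneg_left hprod (by positivity)

lemma sum_biUnion_le_nonneg {α β : Type*} [DecidableEq α] [DecidableEq β]
    (s : Finset α) (g : α → Finset β) (f : β → ℝ) (hf : ∀ b, 0 ≤ f b) :
    ∑ b ∈ s.biUnion g, f b ≤ ∑ a ∈ s, ∑ b ∈ g a, f b := by
  induction s using Finset.induction with
  | empty => simp
  | insert _ _ h ih =>
    rename_i a s'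
    rw [Finset.biUnion_insert, Finset.sum_insert h]
    calc ∑ b ∈ g a ∪ s'.biUnion g, f b
        ≤ (∑ b ∈ g a, f b) + ∑ b ∈ s'.biUnion g, f b := by
          have h2 := Finset.sum_union_inter (s₁ := g a) (s₂ := s'.biUnion g) (f := f)
          have h3 : 0 ≤ ∑ b ∈ g a ∩ s'.biUnion g, f b :=
            Finset.sum_nonneg fun b _ => hf b
          linarith
      _ ≤ (∑ b ∈ g a, f b) + ∑ a' ∈ s', ∑ b ∈ g a', f b := by linarith
set_option maxHeartbeats 1000000 in
theorem stmt_13 :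
    ∃ c : ℝ, 0 < c ∧
      ∀ (Ω : Type) (_ : Fintype Ω) (_ : Nonempty Ω)
        (A : Finset (Ω → ℝ)),
        (∀ f ∈ A, ∀ i : Ω, |f i| ≤ 1) →
        ∀ t : ℝ, 0 < t → t < 1 →
        (∀ f ∈ A, ∀ g ∈ A, f ≠ g →
          (Fintype.card Ω : ℝ)⁻¹ * ∑ i : Ω, (f i - g i) ^ 2 ≥ t ^ 2) →
        ∀ k : ℝ, 0 < k → (A.card : ℝ) ≤ (1 / 2) * Real.exp (c * t ^ 4 * k) →
        ∃ σ : Finset Ω, (σ.card : ℝ) ≤ k ∧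
          ∀ f ∈ A, ∀ g ∈ A, f ≠ g →
            ((σ.card : ℝ))⁻¹ * ∑ i ∈ σ, (f i - g i) ^ 2 ≥ (t / 2) ^ 2 := by
  classical
  refine ⟨1 / 512, by norm_num, ?_⟩
  intro Ω _ _ A hbound t ht0 ht1 hsep k hk0 hcard
  set n : ℕ := Fintype.card Ω with hn
  have hn0 : 0 < n := Fintype.card_pos
  have hn0' : (0:ℝ) < n := by exact_mod_cast hn0
  by_cases hkn : (n : ℝ) ≤ k
  · -- take σ = univ
    refine ⟨Finset.univ, by simpa using hkn, fun f hf g hg hfg => ?_⟩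
    have h1 := hsep f hf g hg hfg
    have h2 : ((Finset.univ : Finset Ω).card : ℝ) = (n:ℝ) := by
      simp [hn]
    rw [h2]
    have ht2 : (t/2)^2 ≤ t^2 := by nlinarith
    exact le_trans ht2 h1
  push_neg at hkn
  by_cases hk2 : k ≤ 200
  · -- A is empty
    have ht4 : t ^ 4 ≤ 1 := pow_le_one₀ ht0.le ht1.le
    have hlt : (1:ℝ)/512 * t^4 * k < Real.log 2 := by
      have h2 : (1:ℝ)/512 * t^4 * k ≤ 200/512 := by nlinarith
      have := Real.log_two_gt_d9
      linarith
    have hexp : Real.exp ((1:ℝ)/512 * t^4 * k) < 2 := by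
      calc Real.exp ((1:ℝ)/512 * t^4 * k) < Real.exp (Real.log 2) :=
            Real.exp_lt_exp.mpr hlt
        _ = 2 := Real.exp_log (by norm_num)
    have hA1 : (A.card : ℝ) < 1 := by
      calc (A.card : ℝ) ≤ 1/2 * Real.exp ((1:ℝ)/512 * t^4 * k) := hcard
        _ < 1/2 * 2 := by linarith
        _ = 1 := by norm_num
    have hA0 : A = ∅ := by
      rw [← Finset.card_eq_zero]
      exact_mod_cast Nat.lt_one_iff.mp (by exact_mod_cast hA1)
    exact ⟨∅, by simpa using hk0.le, by simp [hA0]⟩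
  push_neg at hk2
  -- main probabilistic case: 200 < k < n
  set p : ℝ := k / (2 * n) with hp
  have hp0 : 0 < p := by positivity
  have hp1 : p ≤ 1 := by
    rw [hp, div_le_one (by positivity)]
    linarith
  set σb : (Ω → Bool) → Finset Ω :=
    fun b => Finset.univ.filter (fun i => b i = true) with hσb
  set W : (Ω → Bool) → ℝ := fun b => ∏ i, (if b i then p else 1 - p) with hW
  have hWnn : ∀ b, 0 ≤ W b := fun b => Finset.prod_nonneg fun i _ => by
    split <;> linarith
  have hWsum : ∑ b : Ω → Bool, W b = 1 := by
    rw [hW]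
    rw [sum_pi_bool (fun i v => if v then p else 1 - p)]
    simp
  -- bad event for the cardinality
  set B0 : Finset (Ω → Bool) :=
    Finset.univ.filter (fun b => k < ((σb b).card : ℝ)) with hB0def
  have hB0 : ∑ b ∈ B0, W b ≤ 1/2 := by
    have hcond : ∀ b ∈ B0, Real.exp k ≤
        ∏ i, (if b i then (fun _ : Ω => Real.exp 1) i else 1) := by
      intro b hb
      rw [hB0def, Finset.mem_filter] at hb
      have h1 : (∏ i, (if b i then (fun _ : Ω => Real.exp 1) i else 1)) =
          Real.exp 1 ^ (σb b).card := by
        rw [hσb, ← Finset.prod_filter]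
        simp
      rw [h1, ← Real.exp_nat_mul, mul_one]
      exact Real.exp_le_exp.mpr hb.2.le
    have hchern := chernoff_core hp0.le hp1 (fun _ : Ω => Real.exp 1)
      (fun _ => (Real.exp_pos 1).le) (Real.exp_pos k) B0 hcond
    have hsum1 : ∑ _i : Ω, (Real.exp 1 - 1) = (n : ℝ) * (Real.exp 1 - 1) := by
      rw [Finset.sum_const, Finset.card_univ, nsmul_eq_mul, hn]
    have hpn : p * ((n:ℝ) * (Real.exp 1 - 1)) = k / 2 * (Real.exp 1 - 1) := by
      rw [hp]; field_simp
    have hfin : (Real.exp k)⁻¹ * Real.exp (p * ∑ _i : Ω, (Real.exp 1 - 1)) ≤ 1/2 := by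
      rw [hsum1, hpn, ← Real.exp_neg, ← Real.exp_add]
      have he := Real.exp_one_lt_d9
      have hz : -k + k / 2 * (Real.exp 1 - 1) ≤ -1 := by nlinarith
      calc Real.exp (-k + k / 2 * (Real.exp 1 - 1)) ≤ Real.exp (-1) :=
            Real.exp_le_exp.mpr hz
        _ ≤ 1/2 := by
            have h2 := Real.exp_one_gt_d9
            have h3 : Real.exp (-1) * Real.exp 1 = 1 := by
              rw [← Real.exp_add]; simp
            nlinarith [Real.exp_pos (-1)]
    calc ∑ b ∈ B0, W b ≤ (Real.exp k)⁻¹ * Real.exp (p * ∑ _i : Ω, (Real.exp 1 - 1)) := hchern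
      _ ≤ 1/2 := hfin
  -- bad events for pairs
  set P : Finset ((Ω → ℝ) × (Ω → ℝ)) :=
    (A ×ˢ A).filter (fun q => q.1 ≠ q.2) with hPdef
  set Bq : (Ω → ℝ) × (Ω → ℝ) → Finset (Ω → Bool) :=
    fun q => Finset.univ.filter
      (fun b => ∑ i ∈ σb b, (q.1 i - q.2 i) ^ 2 < k * t^2 / 4) with hBqdef
  have hBq : ∀ q ∈ P, ∑ b ∈ Bq q, W b ≤ Real.exp (-(k * t^2) / 128) := by
    intro q hq
    rw [hPdef, Finset.mem_filter, Finset.mem_product] at hq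
    obtain ⟨⟨hq1, hq2⟩, hqne⟩ := hq
    have hh0 : ∀ i, (0:ℝ) ≤ (q.1 i - q.2 i) ^ 2 := fun i => sq_nonneg _
    have hh4 : ∀ i, (q.1 i - q.2 i) ^ 2 ≤ 4 := by
      intro i
      have h1 := abs_le.mp (hbound q.1 hq1 i)
      have h2 := abs_le.mp (hbound q.2 hq2 i)
      nlinarith
    have hM : (n:ℝ) * t^2 ≤ ∑ i, (q.1 i - q.2 i) ^ 2 := by
      have h1 := hsep q.1 hq1 q.2 hq2 hqne
      rw [ge_iff_le] at h1
      calc (n:ℝ) * t^2 ≤ (n:ℝ) * ((n:ℝ)⁻¹ * ∑ i, (q.1 i - q.2 i) ^ 2) :=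
            mul_le_mul_of_nonneg_left h1 hn0'.le
        _ = ∑ i, (q.1 i - q.2 i) ^ 2 := by
            rw [← mul_assoc, mul_inv_cancel₀ hn0'.ne', one_mul]
    have hψ0 : ∀ i, (0:ℝ) ≤ Real.exp (-(q.1 i - q.2 i) ^ 2 / 16) :=
      fun i => (Real.exp_pos _).le
    have hcond : ∀ b ∈ Bq q, Real.exp (-(k * t^2) / 64) ≤
        ∏ i, (if b i then Real.exp (-(q.1 i - q.2 i) ^ 2 / 16) else 1) := by
      intro b hb
      rw [hBqdef, Finset.mem_filter] at hb
      have hS : ∑ i ∈ σb b, (q.1 i - q.2 i) ^ 2 < k * t^2 / 4 := hb.2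
      have h1 : (∏ i, (if b i then Real.exp (-(q.1 i - q.2 i) ^ 2 / 16) else 1)) =
          Real.exp (∑ i ∈ σb b, (-(q.1 i - q.2 i) ^ 2 / 16)) := by
        rw [Real.exp_sum, hσb, Finset.prod_filter]
      have h2 : ∑ i ∈ σb b, (-(q.1 i - q.2 i) ^ 2 / 16) =
          -(∑ i ∈ σb b, (q.1 i - q.2 i) ^ 2) / 16 := by
        rw [← Finset.sum_div, Finset.sum_neg_distrib]
      rw [h1, h2]
      apply Real.exp_le_exp.mpr
      linarith
    have hchern := chernoff_core hp0.le hp1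
      (fun i => Real.exp (-(q.1 i - q.2 i) ^ 2 / 16)) hψ0 (Real.exp_pos _) (Bq q) hcond
    have hsumψ : ∑ i, (Real.exp (-(q.1 i - q.2 i) ^ 2 / 16) - 1) ≤
        -(3 / 64) * ∑ i, (q.1 i - q.2 i) ^ 2 := by
      calc ∑ i, (Real.exp (-(q.1 i - q.2 i) ^ 2 / 16) - 1)
          ≤ ∑ i, (-(3 / 64) * (q.1 i - q.2 i) ^ 2) := by
            refine Finset.sum_le_sum fun i _ => ?_
            have h1 := exp_neg_le_quad (x := (q.1 i - q.2 i) ^ 2 / 16)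
              (by positivity)
            have h2 : -((q.1 i - q.2 i) ^ 2 / 16) = -(q.1 i - q.2 i) ^ 2 / 16 := by
              ring
            rw [← h2]
            nlinarith [hh0 i, hh4 i]
        _ = -(3/64) * ∑ i, (q.1 i - q.2 i) ^ 2 := by rw [Finset.mul_sum]
    have hpM : k * t^2 / 2 ≤ p * ∑ i, (q.1 i - q.2 i) ^ 2 := by
      have h1 : p * ((n:ℝ) * t^2) ≤ p * ∑ i, (q.1 i - q.2 i) ^ 2 :=
        mul_le_mul_of_nonneg_left hM hp0.le
      have h2 : p * ((n:ℝ) * t^2) = k * t^2 / 2 := by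
        rw [hp]; field_simp
      linarith
    have hexp : p * ∑ i, (Real.exp (-(q.1 i - q.2 i) ^ 2 / 16) - 1) ≤
        -(3 * (k * t^2)) / 128 := by
      have h1 : p * ∑ i, (Real.exp (-(q.1 i - q.2 i) ^ 2 / 16) - 1) ≤
          p * (-(3/64) * ∑ i, (q.1 i - q.2 i) ^ 2) :=
        mul_le_mul_of_nonneg_left hsumψ hp0.le
      nlinarith
    calc ∑ b ∈ Bq q, W b
        ≤ (Real.exp (-(k * t^2) / 64))⁻¹ *
            Real.exp (p * ∑ i, (Real.exp (-(q.1 i - q.2 i) ^ 2 / 16) - 1)) := hchern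
      _ = Real.exp (-(-(k * t^2) / 64) +
            p * ∑ i, (Real.exp (-(q.1 i - q.2 i) ^ 2 / 16) - 1)) := by
          rw [← Real.exp_neg, ← Real.exp_add]
      _ ≤ Real.exp (-(k * t^2) / 128) := by
          apply Real.exp_le_exp.mpr
          linarith
  have hPsum : ∑ q ∈ P, ∑ b ∈ Bq q, W b ≤ 1/4 := by
    have h1 : ∑ q ∈ P, ∑ b ∈ Bq q, W b ≤ (P.card : ℝ) * Real.exp (-(k * t^2) / 128) := by
      calc ∑ q ∈ P, ∑ b ∈ Bq q, W b ≤ ∑ _q ∈ P, Real.exp (-(k * t^2) / 128) :=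
            Finset.sum_le_sum hBq
        _ = (P.card : ℝ) * Real.exp (-(k * t^2) / 128) := by
            rw [Finset.sum_const, nsmul_eq_mul]
    have hPcard : (P.card : ℝ) ≤ (A.card : ℝ) * A.card := by
      have h2 : P.card ≤ (A ×ˢ A).card := by
        rw [hPdef]; exact Finset.card_filter_le _ _
      rw [Finset.card_product] at h2
      exact_mod_cast h2
    have hA2 : (A.card : ℝ) * A.card ≤ 1/4 * Real.exp (1/256 * t^4 * k) := by
      have h0 : (0:ℝ) ≤ (A.card : ℝ) := Nat.cast_nonneg _
      calc (A.card : ℝ) * A.card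
          ≤ (1/2 * Real.exp (1/512 * t^4 * k)) * (1/2 * Real.exp (1/512 * t^4 * k)) :=
            mul_le_mul hcard hcard h0 (by positivity)
        _ = 1/4 * Real.exp (1/512 * t^4 * k + 1/512 * t^4 * k) := by
            rw [Real.exp_add]; ring
        _ = 1/4 * Real.exp (1/256 * t^4 * k) := by
            congr 1; ring
    have h12 : t^2 ≤ 1 := by nlinarith
    have htt : t^4 ≤ t^2 := by
      nlinarith [mul_nonneg (sq_nonneg t) (sub_nonneg.mpr h12)]
    calc ∑ q ∈ P, ∑ b ∈ Bq q, W b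
        ≤ (P.card : ℝ) * Real.exp (-(k * t^2) / 128) := h1
      _ ≤ (1/4 * Real.exp (1/256 * t^4 * k)) * Real.exp (-(k * t^2) / 128) := by
          apply mul_le_mul_of_nonneg_right (hPcard.trans hA2) (Real.exp_pos _).le
      _ = 1/4 * Real.exp (1/256 * t^4 * k + -(k * t^2) / 128) := by
          rw [Real.exp_add]; ring
      _ ≤ 1/4 * Real.exp 0 := by
          apply mul_le_mul_of_nonneg_left (Real.exp_le_exp.mpr (by nlinarith)) (by norm_num)
      _ = 1/4 := by rw [Real.exp_zero]; norm_num
  -- there is a good b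
  set Bad : Finset (Ω → Bool) := B0 ∪ P.biUnion Bq with hBaddef
  have hBadlt : ∑ b ∈ Bad, W b < 1 := by
    have h1 : ∑ b ∈ Bad, W b ≤ (∑ b ∈ B0, W b) + ∑ b ∈ P.biUnion Bq, W b := by
      have h2 := Finset.sum_union_inter (s₁ := B0) (s₂ := P.biUnion Bq) (f := W)
      have h3 : 0 ≤ ∑ b ∈ B0 ∩ P.biUnion Bq, W b :=
        Finset.sum_nonneg fun b _ => hWnn b
      rw [hBaddef]; linarith
    have h4 := sum_biUnion_le_nonneg P Bq W hWnn
    linarith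
  have hex : ∃ b : Ω → Bool, b ∉ Bad := by
    by_contra hc
    push_neg at hc
    have : Bad = Finset.univ := Finset.eq_univ_iff_forall.mpr hc
    rw [this, hWsum] at hBadlt
    exact absurd hBadlt (lt_irrefl 1)
  obtain ⟨b, hb⟩ := hex
  rw [hBaddef, Finset.mem_union] at hb
  push_neg at hb
  obtain ⟨hb0, hbq⟩ := hb
  have hcardle : ((σb b).card : ℝ) ≤ k := by
    by_contra hc
    push_neg at hc
    exact hb0 (Finset.mem_filter.mpr ⟨Finset.mem_univ _, hc⟩)
  refine ⟨σb b, hcardle, fun f hf g hg hfg => ?_⟩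
  have hqP : (⟨f, g⟩ : (Ω → ℝ) × (Ω → ℝ)) ∈ P := by
    rw [hPdef]
    exact Finset.mem_filter.mpr ⟨Finset.mem_product.mpr ⟨hf, hg⟩, hfg⟩
  have hbnot : b ∉ Bq ⟨f, g⟩ := by
    intro hmem
    exact absurd (Finset.mem_biUnion.mpr ⟨⟨f, g⟩, hqP, hmem⟩) hbq
  have hS : k * t^2 / 4 ≤ ∑ i ∈ σb b, (f i - g i) ^ 2 := by
    by_contra hc
    push_neg at hc
    exact hbnot (Finset.mem_filter.mpr ⟨Finset.mem_univ _, hc⟩)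
  have hSpos : (0:ℝ) < k * t^2 / 4 := by positivity
  have hcard1 : (0:ℝ) < ((σb b).card : ℝ) := by
    by_contra hc
    push_neg at hc
    have : (σb b).card = 0 := by exact_mod_cast le_antisymm (by exact_mod_cast hc) (Nat.zero_le _)
    rw [Finset.card_eq_zero] at this
    rw [this] at hS
    simp at hS
    linarith
  have hinv : k⁻¹ ≤ ((σb b).card : ℝ)⁻¹ :=
    inv_anti₀ hcard1 hcardle
  calc (t/2)^2 = k⁻¹ * (k * t^2 / 4) := by field_simp; ring
    _ ≤ ((σb b).card : ℝ)⁻¹ * (k * t^2 / 4) :=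
        mul_le_mul_of_nonneg_right hinv hSpos.le
    _ ≤ ((σb b).card : ℝ)⁻¹ * ∑ i ∈ σb b, (f i - g i) ^ 2 :=
        mul_le_mul_of_nonneg_left hS (by positivity)
end

section
/- Let B ⊆ ℝ^n be convex and symmetric (B = -B), viewed as a class of functions on {1,...,n}. If a set σ ⊆ {1,...,n} is t-shattered by B with some level function h, then P_σ(B) ⊇ [-t/2, t/2]^σ, where P_σ is the coordinate projection onto ℝ^σ. -/
theorem stmt_17 (n : ℕ) (B : Set (Fin n → ℝ))
    (hconv : Convex ℝ B) (hsymm : ∀ f ∈ B, -f ∈ B)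
    (t : ℝ) (ht : 0 < t)
    (σ : Finset (Fin n)) (h : Fin n → ℝ)
    (hshat : ∀ σ' ⊆ σ, ∃ f ∈ B,
      (∀ i ∈ σ', f i ≥ h i + t) ∧ ∀ i ∈ σ, i ∉ σ' → f i ≤ h i) :
    ∀ z : Fin n → ℝ, (∀ i ∈ σ, |z i| ≤ t / 2) →
      ∃ f ∈ B, ∀ i ∈ σ, f i = z i := by
  intro z hz
  have key : ∀ τ : Finset (Fin n), τ ⊆ σ → ∀ σ' ⊆ σ \ τ, ∃ f ∈ B,
      (∀ i ∈ τ, f i = z i) ∧ (∀ i ∈ σ', t / 2 ≤ f i) ∧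
      (∀ i ∈ σ \ τ, i ∉ σ' → f i ≤ -(t / 2)) := by
    intro τ
    induction τ using Finset.induction_on with
    | empty =>
      intro _ σ' hσ'
      have hσ's : σ' ⊆ σ := hσ'.trans (by simp)
      obtain ⟨f1, hf1B, hf1a, hf1b⟩ := hshat σ' hσ's
      obtain ⟨f2, hf2B, hf2a, hf2b⟩ := hshat (σ \ σ') Finset.sdiff_subset
      have hg : (1/2 : ℝ) • f1 + (1/2 : ℝ) • (-f2) ∈ B :=
        hconv hf1B (hsymm f2 hf2B) (by norm_num) (by norm_num) (by norm_num)
      refine ⟨_, hg, by simp, ?_, ?_⟩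
      · intro i hi
        have h1 := hf1a i hi
        have h2 := hf2b i (hσ's hi) (by simp [hi])
        simp only [Pi.add_apply, Pi.smul_apply, Pi.neg_apply, smul_eq_mul]
        linarith
      · intro i hi hi'
        have hiσ : i ∈ σ := (Finset.mem_sdiff.mp hi).1
        have h1 := hf1b i hiσ hi'
        have h2 := hf2a i (Finset.mem_sdiff.mpr ⟨hiσ, hi'⟩)
        simp only [Pi.add_apply, Pi.smul_apply, Pi.neg_apply, smul_eq_mul]
        linarith
    | @insert j τ' hj ih =>
      intro hsub σ' hσ'
      have hτ'sub : τ' ⊆ σ := (Finset.subset_insert j τ').trans hsub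
      have hjσ : j ∈ σ := hsub (Finset.mem_insert_self j τ')
      have h1 : insert j σ' ⊆ σ \ τ' := by
        intro i hi
        rcases Finset.mem_insert.mp hi with rfl | hi
        · exact Finset.mem_sdiff.mpr ⟨hjσ, hj⟩
        · have := hσ' hi
          rw [Finset.mem_sdiff] at this ⊢
          exact ⟨this.1, fun hm => this.2 (Finset.mem_insert_of_mem hm)⟩
      have h2 : σ' ⊆ σ \ τ' := (Finset.subset_insert j σ').trans h1
      obtain ⟨f1, hf1B, hf1eq, hf1ge, hf1le⟩ := ih hτ'sub (insert j σ') h1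
      obtain ⟨f2, hf2B, hf2eq, hf2ge, hf2le⟩ := ih hτ'sub σ' h2
      have hjσ' : j ∉ σ' := fun hmem => by
        have := hσ' hmem; simp at this
      have hf1j : t / 2 ≤ f1 j := hf1ge j (Finset.mem_insert_self _ _)
      have hf2j : f2 j ≤ -(t / 2) :=
        hf2le j (Finset.mem_sdiff.mpr ⟨hjσ, hj⟩) hjσ'
      have hzj := abs_le.mp (hz j hjσ)
      have hden : 0 < f1 j - f2 j := by linarith
      set a : ℝ := (z j - f2 j) / (f1 j - f2 j) with ha_def
      have ha : 0 ≤ a := div_nonneg (by linarith) hden.le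
      have ha1 : a ≤ 1 := by
        rw [div_le_one hden]; linarith
      have hmul : a * (f1 j - f2 j) = z j - f2 j := div_mul_cancel₀ _ hden.ne'
      have hg : a • f1 + (1 - a) • f2 ∈ B :=
        hconv hf1B hf2B ha (by linarith) (by ring)
      refine ⟨_, hg, ?_, ?_, ?_⟩
      · intro i hi
        simp only [Pi.add_apply, Pi.smul_apply, smul_eq_mul]
        rcases Finset.mem_insert.mp hi with rfl | hi
        · nlinarith [hmul]
        · rw [hf1eq i hi, hf2eq i hi]; ring
      · intro i hi
        have g1 := hf1ge i (Finset.mem_insert_of_mem hi)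
        have g2 := hf2ge i hi
        simp only [Pi.add_apply, Pi.smul_apply, smul_eq_mul]
        nlinarith [mul_le_mul_of_nonneg_left g1 ha]
      · intro i hi hi'
        have hij : i ≠ j := by
          intro rfl'; subst rfl'
          exact (Finset.mem_sdiff.mp hi).2 (Finset.mem_insert_self _ _)
        have hi1 : i ∈ σ \ τ' := by
          have := Finset.mem_sdiff.mp hi
          exact Finset.mem_sdiff.mpr ⟨this.1, fun hm => this.2 (Finset.mem_insert_of_mem hm)⟩
        have g1 := hf1le i hi1 (by simp [hij, hi'])
        have g2 := hf2le i hi1 hi'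
        simp only [Pi.add_apply, Pi.smul_apply, smul_eq_mul]
        nlinarith [mul_le_mul_of_nonneg_left g1 ha]
  obtain ⟨f, hfB, hfeq, _, _⟩ := key σ le_rfl ∅ (Finset.empty_subset _)
  exact ⟨f, hfB, hfeq⟩
end
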